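/- arXiv:0711.2666 — 5 statements merged into one kernel-verified Lean document; each statement's English description precedes it below -/
import Mathlib

section
/- If the set W(P,D) is nonempty, then there exists a probability measure W ∈ W(P,D) attaining the infimum: R(P,Q,D) = H(W ‖ P×Q). This holds for all D ≥ 0, including D = D_min(P,Q). -/
open MeasureTheory Filter Set Topology Classical
open scoped ENNReal NNReal

noncomputable section

/-- `-log t` as a value in `ℝ≥0∞` (equal to `∞` when `t = 0`); intended for `t ≤ 1`. -/
def negLog (t : ℝ≥0∞) : ℝ≥0∞ :=
  if t = 0 then ∞ else ENNReal.ofReal (-Real.log t.toReal)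

/-- `log t` as a value in `ℝ≥0∞` (equal to `∞` when `t = ∞`); intended for `t ≥ 1`. -/
def posLog (t : ℝ≥0∞) : ℝ≥0∞ :=
  if t = ∞ then ∞ else ENNReal.ofReal (Real.log t.toReal)

/-- The extended-real-valued logarithm of an `ℝ≥0∞` number. -/
def eLog (t : ℝ≥0∞) : EReal :=
  if t = 0 then ⊥ else if t = ∞ then ⊤ else ((Real.log t.toReal : ℝ) : EReal)

/-- Relative entropy `H(μ‖ν)` (in nats), valued in `ℝ≥0∞`: it equals
`∫ log (dμ/dν) dμ` when `μ ≪ ν` (and `+∞` when this integral is not defined,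
which for probability measures can only mean `+∞`), and `+∞` when `¬ μ ≪ ν`. -/
def relEnt {α : Type*} [MeasurableSpace α] (μ ν : Measure α) : ℝ≥0∞ :=
  if μ ≪ ν ∧ Integrable (llr μ ν) μ then ENNReal.ofReal (∫ x, llr μ ν x ∂μ) else ∞

/-- The set `W(P,D)` of couplings: probability measures on `S × T` with first
marginal `P` and expected distortion at most `D`. -/
def distSet {S T : Type*} [MeasurableSpace S] [MeasurableSpace T]
    (ρ : S × T → ℝ) (P : Measure S) (D : ℝ) : Set (Measure (S × T)) :=
  {W | IsProbabilityMeasure W ∧ W.map Prod.fst = P ∧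
    ((∫⁻ z, ENNReal.ofReal (ρ z) ∂W : ℝ≥0∞) : EReal) ≤ ((D : ℝ) : EReal)}

/-- The rate function `R(P,Q,D) = inf_{W ∈ W(P,D)} H(W‖P×Q)` (equal to `+∞`
when `W(P,D)` is empty). -/
def Rrate {S T : Type*} [MeasurableSpace S] [MeasurableSpace T]
    (ρ : S × T → ℝ) (P : Measure S) (Q : Measure T) (D : ℝ) : ℝ≥0∞ :=
  ⨅ W ∈ distSet ρ P D, relEnt W (P.prod Q)

/-- `Λ(P,Q,λ) = E_X[log E_Y e^{λρ(X,Y)}]`, valued in `EReal`.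
For `λ ≥ 0` the integrand lies in `[0,∞]`; for `λ < 0` it lies in `[-∞,0]`. -/
def Lam {S T : Type*} [MeasurableSpace S] [MeasurableSpace T]
    (ρ : S × T → ℝ) (P : Measure S) (Q : Measure T) (l : ℝ) : EReal :=
  if 0 ≤ l then
    ((∫⁻ x, posLog (∫⁻ y, ENNReal.ofReal (Real.exp (l * ρ (x, y))) ∂Q) ∂P : ℝ≥0∞) : EReal)
  else
    -(((∫⁻ x, negLog (∫⁻ y, ENNReal.ofReal (Real.exp (l * ρ (x, y))) ∂Q) ∂P : ℝ≥0∞) : EReal))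

/-- The Fenchel–Legendre transform `Λ*(P,Q,D) = sup_{λ ≤ 0} [λD - Λ(P,Q,λ)]`. -/
def LamStar {S T : Type*} [MeasurableSpace S] [MeasurableSpace T]
    (ρ : S × T → ℝ) (P : Measure S) (Q : Measure T) (D : ℝ) : EReal :=
  ⨆ l ∈ Iic (0 : ℝ), (((l * D : ℝ) : EReal) - Lam ρ P Q l)

/-- `ρ_Q(x) := essinf_{Y ∼ Q} ρ(x,Y)`. -/
def rhoQ {S T : Type*} [MeasurableSpace T]
    (ρ : S × T → ℝ) (Q : Measure T) (x : S) : ℝ :=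
  essInf (fun y => ρ (x, y)) Q

/-- `D_min(P,Q) := inf {D : Λ*(P,Q,D) < ∞}`. -/
def DminPQ {S T : Type*} [MeasurableSpace S] [MeasurableSpace T]
    (ρ : S × T → ℝ) (P : Measure S) (Q : Measure T) : ℝ :=
  sInf {D : ℝ | LamStar ρ P Q D ≠ ⊤}

/-- `D_ave(P,Q) := E ρ(X,Y)` for independent `X ∼ P`, `Y ∼ Q`, valued in `ℝ≥0∞`. -/
def DavePQ {S T : Type*} [MeasurableSpace S] [MeasurableSpace T]
    (ρ : S × T → ℝ) (P : Measure S) (Q : Measure T) : ℝ≥0∞ :=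
  ∫⁻ z, ENNReal.ofReal (ρ z) ∂(P.prod Q)

/-- The candidate derivative `Λ'(λ)` of `Λ(P,Q,·)`. -/
def LamD {S T : Type*} [MeasurableSpace S] [MeasurableSpace T]
    (ρ : S × T → ℝ) (P : Measure S) (Q : Measure T) (l : ℝ) : ℝ :=
  ∫ x, (∫ y, ρ (x, y) * Real.exp (l * ρ (x, y)) ∂Q) /
    (∫ y, Real.exp (l * ρ (x, y)) ∂Q) ∂P

/-- The left shift on sequences. -/
def shiftSeq {α : Type*} (x : ℕ → α) (n : ℕ) : α := x (n + 1)

/-- The single-letter distortion measure `ρ_n` on `n`-strings. -/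
def rhoFin {S T : Type*} (ρ : S × T → ℝ) (n : ℕ) (x : Fin n → S) (y : Fin n → T) : ℝ :=
  (n : ℝ)⁻¹ * ∑ k, ρ (x k, y k)

/-- `L_n(x_1^n, Q^n, D) = -(1/n) log Q^n(B_n(x_1^n,D))`, valued in `ℝ≥0∞`,
for a memoryless (product) codebook distribution `Q^n`. -/
def LnIID {S T : Type*} [MeasurableSpace T]
    (ρ : S × T → ℝ) (Q : Measure T) (D : ℝ) (n : ℕ) (x : ℕ → S) : ℝ≥0∞ :=
  (n : ℝ≥0∞)⁻¹ *
    negLog ((Measure.pi fun _ : Fin n => Q) {y | rhoFin ρ n (fun k => x k) y ≤ D})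

/-- The empirical distribution `P_{x_1^n} = (1/n) ∑_{k=1}^n δ_{x_k}`. -/
def empMeas {S : Type*} [MeasurableSpace S] (n : ℕ) (x : ℕ → S) : Measure S :=
  (n : ℝ≥0∞)⁻¹ • ∑ k ∈ Finset.range n, Measure.dirac (x k)

/-- The `n`-dimensional marginal of a measure on sequences. -/
def margN {α : Type*} [MeasurableSpace α] (μ : Measure (ℕ → α)) (n : ℕ) :
    Measure (Fin n → α) :=
  μ.map fun x (k : Fin n) => x (k : ℕ)

/-- The strong mixing condition `C⁻¹ 𝒬(A) 𝒬(B) ≤ 𝒬(A ∩ B) ≤ C 𝒬(A) 𝒬(B)` for all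
`A ∈ σ(Y_1^n)`, `B ∈ σ(Y_{n+1}^∞)` and all `n`. -/
def Mixing {T : Type*} [MeasurableSpace T] (𝒬 : Measure (ℕ → T)) (C : ℝ) : Prop :=
  ∀ (n : ℕ) (A B : Set (ℕ → T)),
    MeasurableSet[MeasurableSpace.comap (fun y (k : Fin n) => y (k : ℕ)) inferInstance] A →
    MeasurableSet[MeasurableSpace.comap (fun y (k : ℕ) => y (k + n)) inferInstance] B →
    (ENNReal.ofReal C)⁻¹ * (𝒬 A * 𝒬 B) ≤ 𝒬 (A ∩ B) ∧
      𝒬 (A ∩ B) ≤ ENNReal.ofReal C * (𝒬 A * 𝒬 B)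

/-- `L_n(x_1^n, Q_n, D) = -(1/n) log Q_n(B_n(x_1^n,D))` where `Q_n` is the
`n`-dimensional marginal of the codebook process law `𝒬`. -/
def LnMem {S T : Type*} [MeasurableSpace T]
    (ρ : S × T → ℝ) (𝒬 : Measure (ℕ → T)) (D : ℝ) (n : ℕ) (x : ℕ → S) : ℝ≥0∞ :=
  (n : ℝ≥0∞)⁻¹ * negLog (margN 𝒬 n {y | rhoFin ρ n (fun k => x k) y ≤ D})

/-- The set `W_n(P_n,D)` of couplings on `S^n × T^n`. -/
def distSetN {S T : Type*} [MeasurableSpace S] [MeasurableSpace T]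
    (ρ : S × T → ℝ) (n : ℕ) (Pn : Measure (Fin n → S)) (D : ℝ) :
    Set (Measure ((Fin n → S) × (Fin n → T))) :=
  {W | IsProbabilityMeasure W ∧ W.map Prod.fst = Pn ∧
    ((∫⁻ z, ENNReal.ofReal (rhoFin ρ n z.1 z.2) ∂W : ℝ≥0∞) : EReal) ≤ ((D : ℝ) : EReal)}

/-- `R_n(P_n,Q_n,D) = (1/n) inf_{W_n ∈ W_n(P_n,D)} H(W_n‖P_n×Q_n)`. -/
def RnMem {S T : Type*} [MeasurableSpace S] [MeasurableSpace T]
    (ρ : S × T → ℝ) (n : ℕ) (Pn : Measure (Fin n → S)) (Qn : Measure (Fin n → T))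
    (D : ℝ) : ℝ≥0∞ :=
  (n : ℝ≥0∞)⁻¹ * ⨅ W ∈ distSetN ρ n Pn D, relEnt W (Pn.prod Qn)

/-- `Λ_n(P_n,Q_n,λ) = E_{X_1^n}[log E_{Y_1^n} e^{λ ρ_n(X_1^n,Y_1^n)}]`. -/
def LamN {S T : Type*} [MeasurableSpace S] [MeasurableSpace T]
    (ρ : S × T → ℝ) (n : ℕ) (Pn : Measure (Fin n → S)) (Qn : Measure (Fin n → T))
    (l : ℝ) : EReal :=
  Lam (fun z => rhoFin ρ n z.1 z.2) Pn Qn l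

/-- `Λ_n*(P_n,Q_n,D) = (1/n) sup_{λ ≤ 0} [λD - Λ_n(P_n,Q_n,λ)]`. -/
def LamStarN {S T : Type*} [MeasurableSpace S] [MeasurableSpace T]
    (ρ : S × T → ℝ) (n : ℕ) (Pn : Measure (Fin n → S)) (Qn : Measure (Fin n → T))
    (D : ℝ) : EReal :=
  (((n : ℝ)⁻¹ : ℝ) : EReal) *
    ⨆ l ∈ Iic (0 : ℝ), (((l * D : ℝ) : EReal) - LamN ρ n Pn Qn l)

/-- One-sided Fenchel–Legendre transform `D ↦ sup_{λ ≤ 0} [λD - Λ(λ)]` of a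
function `Λ : ℝ → EReal`. -/
def FLT (L : ℝ → EReal) (D : ℝ) : EReal :=
  ⨆ l ∈ Iic (0 : ℝ), (((l * D : ℝ) : EReal) - L l)

lemma mul_log_ge_sub_one {x : ℝ} (hx : 0 ≤ x) : x - 1 ≤ x * Real.log x := by
  rcases eq_or_lt_of_le hx with h | h
  · simp [← h]
  · have h2 := Real.log_le_sub_one_of_pos (inv_pos.mpr h)
    rw [Real.log_inv] at h2
    have : 1 - 1/x ≤ Real.log x := by
      rw [one_div]; linarith
    calc x - 1 = x * (1 - 1/x) := by field_simp
    _ ≤ x * Real.log x := by nlinarith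

/-- Pointwise Hellinger-type bound: `(√a - √m)² ≤ a log a - a log m - a + m`. -/
lemma hellinger_pointwise {a m : ℝ} (ha : 0 ≤ a) (hm : 0 ≤ m) (h0 : m = 0 → a = 0) :
    (Real.sqrt a - Real.sqrt m) ^ 2 ≤ a * Real.log a - a * Real.log m - a + m := by
  rcases eq_or_lt_of_le hm with hm0 | hm0
  · have ha0 : a = 0 := h0 hm0.symm
    simp [ha0, ← hm0]
  rcases eq_or_lt_of_le ha with ha0 | ha0
  · rw [← ha0]
    simp [Real.sq_sqrt hm]
  -- a, m > 0
  have hs : Real.log (Real.sqrt (m / a)) ≤ Real.sqrt (m / a) - 1 :=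
    Real.log_le_sub_one_of_pos (Real.sqrt_pos.mpr (div_pos hm0 ha0))
  have hlogs : Real.log (Real.sqrt (m / a)) = (Real.log m - Real.log a) / 2 := by
    rw [Real.log_sqrt (div_pos hm0 ha0).le, Real.log_div hm0.ne' ha0.ne']
  have hsqrt : Real.sqrt (m / a) = Real.sqrt m / Real.sqrt a := Real.sqrt_div hm a
  have hsa : Real.sqrt a * Real.sqrt a = a := Real.mul_self_sqrt ha
  have hsm : Real.sqrt m * Real.sqrt m = m := Real.mul_self_sqrt hm
  have hsapos : 0 < Real.sqrt a := Real.sqrt_pos.mpr ha0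
  have key : a * Real.log m - a * Real.log a ≤ 2 * (Real.sqrt a * Real.sqrt m) - 2 * a := by
    have := mul_le_mul_of_nonneg_left hs (le_of_lt (by positivity : (0:ℝ) < 2 * a))
    rw [hlogs, hsqrt] at this
    have hdiv : 2 * a * (Real.sqrt m / Real.sqrt a) = 2 * (Real.sqrt a * Real.sqrt m) := by
      have e : 2 * a * (Real.sqrt m / Real.sqrt a)
          = 2 * (Real.sqrt a * Real.sqrt a) * Real.sqrt m / Real.sqrt a := by rw [hsa]; ring
      rw [e, div_eq_iff hsapos.ne']
      ring
    nlinarith [this]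
  nlinarith [key, hsa, hsm]

/-- For `a b ≥ 0` and `m = (a+b)/2`:
`(√a-√m)² + (√b-√m)² ≤ a log a + b log b - 2 m log m`. -/
lemma jensen_gap {a b : ℝ} (ha : 0 ≤ a) (hb : 0 ≤ b) :
    (Real.sqrt a - Real.sqrt ((a + b) / 2)) ^ 2 + (Real.sqrt b - Real.sqrt ((a + b) / 2)) ^ 2 ≤
      a * Real.log a + b * Real.log b - 2 * (((a + b) / 2) * Real.log ((a + b) / 2)) := by
  set m : ℝ := (a + b) / 2 with hm_def
  have hm : 0 ≤ m := by positivity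
  have h1 := hellinger_pointwise ha hm (by intro h; simp only [hm_def] at h; linarith)
  have h2 := hellinger_pointwise hb hm (by intro h; simp only [hm_def] at h; linarith)
  have : a * Real.log m + b * Real.log m = 2 * (m * Real.log m) := by
    rw [hm_def]; ring
  linarith

lemma jensen_gap_nonneg {a b : ℝ} (ha : 0 ≤ a) (hb : 0 ≤ b) :
    0 ≤ a * Real.log a + b * Real.log b - 2 * (((a + b) / 2) * Real.log ((a + b) / 2)) := by
  have := jensen_gap ha hb
  nlinarith [sq_nonneg (Real.sqrt a - Real.sqrt ((a + b) / 2)),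
    sq_nonneg (Real.sqrt b - Real.sqrt ((a + b) / 2))]

lemma sqrt_diff_sq_le {a b : ℝ} (ha : 0 ≤ a) (hb : 0 ≤ b) :
    (Real.sqrt a - Real.sqrt b) ^ 2 ≤
      2 * (a * Real.log a + b * Real.log b - 2 * (((a + b) / 2) * Real.log ((a + b) / 2))) := by
  have := jensen_gap ha hb
  nlinarith [sq_nonneg (Real.sqrt a + Real.sqrt b - 2 * Real.sqrt ((a + b) / 2))]

lemma abs_m_log_m_le {a b : ℝ} (ha : 0 ≤ a) (hb : 0 ≤ b) :
    |((a + b) / 2) * Real.log ((a + b) / 2)| ≤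
      (|a * Real.log a| + |b * Real.log b|) / 2 + 1 := by
  have hup := jensen_gap_nonneg ha hb
  have hlo : (a + b) / 2 - 1 ≤ ((a + b) / 2) * Real.log ((a + b) / 2) :=
    mul_log_ge_sub_one (by positivity)
  have h1 : a * Real.log a ≤ |a * Real.log a| := le_abs_self _
  have h2 : b * Real.log b ≤ |b * Real.log b| := le_abs_self _
  rw [abs_le]
  constructor <;> nlinarith [abs_nonneg (a * Real.log a), abs_nonneg (b * Real.log b)]

lemma eLpNorm_two_eq {α : Type*} [MeasurableSpace α] (ν : Measure α) (u : α → ℝ) :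
    eLpNorm u 2 ν = (∫⁻ z, ENNReal.ofReal (u z ^ 2) ∂ν) ^ (1/2 : ℝ) := by
  rw [eLpNorm_eq_lintegral_rpow_enorm_toReal (by norm_num) (by norm_num)]
  have h2 : ((2 : ℝ≥0∞)).toReal = (2 : ℝ) := by norm_num
  rw [h2]
  congr 1
  apply lintegral_congr
  intro z
  rw [Real.enorm_eq_ofReal_abs,
    ENNReal.ofReal_rpow_of_nonneg (abs_nonneg _) (by norm_num : (0:ℝ) ≤ 2)]
  congr 1
  rw [show ((2:ℝ)) = ((2:ℕ):ℝ) by norm_num, Real.rpow_natCast, sq_abs]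

lemma ofReal_abs_rpow_two (x : ℝ) :
    ENNReal.ofReal |x| ^ (2:ℝ) = ENNReal.ofReal (x ^ 2) := by
  rw [ENNReal.ofReal_rpow_of_nonneg (abs_nonneg _) (by norm_num : (0:ℝ) ≤ 2),
    show ((2:ℝ)) = ((2:ℕ):ℝ) by norm_num, Real.rpow_natCast, sq_abs]

/-- Main analytic lemma: a minimizing sequence of densities has an L¹ limit whose
entropy is at most `R`. -/
theorem density_limit {α : Type*} [MeasurableSpace α] (ν : Measure α) [IsProbabilityMeasure ν]
    (F : ℕ → α → ℝ) (R : ℝ) (hR : 0 ≤ R)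
    (hFm : ∀ n, Measurable (F n)) (hF0 : ∀ n z, 0 ≤ F n z)
    (hFi : ∀ n, Integrable (F n) ν) (hF1 : ∀ n, ∫ z, F n z ∂ν = 1)
    (hFL : ∀ n, Integrable (fun z => F n z * Real.log (F n z)) ν)
    (hK : ∀ n, ∫ z, F n z * Real.log (F n z) ∂ν ≤ R + (1 : ℝ)/(n + 1))
    (hmid : ∀ n k, R ≤ ∫ z, ((F n z + F k z)/2) * Real.log ((F n z + F k z)/2) ∂ν) :
    ∃ f : α → ℝ, Measurable f ∧ (∀ z, 0 ≤ f z) ∧ Integrable f ν ∧ (∫ z, f z ∂ν = 1) ∧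
      Tendsto (fun n => ∫⁻ z, ENNReal.ofReal |F n z - f z| ∂ν) atTop (𝓝 0) ∧
      Integrable (fun z => f z * Real.log (f z)) ν ∧
      ∫ z, f z * Real.log (f z) ∂ν ≤ R := by
  classical
  set ε : ℕ → ℝ := fun n => (1 : ℝ)/(n + 1) with hε_def
  have hεpos : ∀ n, 0 < ε n := fun n => by positivity
  set g : ℕ → α → ℝ := fun n z => Real.sqrt (F n z) with hg_def
  have hgm : ∀ n, Measurable (g n) := fun n => (hFm n).sqrt
  have hg0 : ∀ n z, 0 ≤ g n z := fun n z => Real.sqrt_nonneg _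
  have hg_sq : ∀ n z, g n z ^ 2 = F n z := fun n z => Real.sq_sqrt (hF0 n z)
  -- the midpoint entropy is integrable
  have hmidInt : ∀ n k, Integrable
      (fun z => ((F n z + F k z)/2) * Real.log ((F n z + F k z)/2)) ν := by
    intro n k
    refine Integrable.mono' (g := fun z =>
      (|F n z * Real.log (F n z)| + |F k z * Real.log (F k z)|) / 2 + 1)
      ((((hFL n).abs.add (hFL k).abs).div_const 2).add (integrable_const 1))
      ?_ (ae_of_all _ fun z => abs_m_log_m_le (hF0 n z) (hF0 k z))
    have hm : Measurable fun z => (F n z + F k z) / 2 := ((hFm n).add (hFm k)).div_const 2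
    exact (hm.mul (Real.measurable_log.comp hm)).aestronglyMeasurable
  -- the key Cauchy-type estimate
  have hCauchyEst : ∀ n k,
      ∫⁻ z, ENNReal.ofReal ((g n z - g k z) ^ 2) ∂ν ≤ ENNReal.ofReal (2 * (ε n + ε k)) := by
    intro n k
    set h : α → ℝ := fun z => F n z * Real.log (F n z) + F k z * Real.log (F k z)
      - 2 * (((F n z + F k z)/2) * Real.log ((F n z + F k z)/2)) with hh_def
    have hhInt : Integrable h ν := ((hFL n).add (hFL k)).sub ((hmidInt n k).const_mul 2)
    have hh0 : ∀ z, 0 ≤ h z := fun z => jensen_gap_nonneg (hF0 n z) (hF0 k z)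
    have step1 : ∫⁻ z, ENNReal.ofReal ((g n z - g k z) ^ 2) ∂ν
        ≤ ∫⁻ z, ENNReal.ofReal (2 * h z) ∂ν := by
      refine lintegral_mono fun z => ENNReal.ofReal_le_ofReal ?_
      exact sqrt_diff_sq_le (hF0 n z) (hF0 k z)
    have step2 : ∫⁻ z, ENNReal.ofReal (2 * h z) ∂ν = ENNReal.ofReal (∫ z, 2 * h z ∂ν) :=
      (ofReal_integral_eq_lintegral_ofReal (hhInt.const_mul 2)
        (ae_of_all _ fun z => mul_nonneg (by norm_num) (hh0 z))).symm
    have step3 : ∫ z, 2 * h z ∂ν ≤ 2 * (ε n + ε k) := by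
      rw [integral_const_mul]
      have e1 : ∫ z, h z ∂ν = (∫ z, (F n z * Real.log (F n z) + F k z * Real.log (F k z)) ∂ν)
          - ∫ z, 2 * (((F n z + F k z)/2) * Real.log ((F n z + F k z)/2)) ∂ν :=
        integral_sub ((hFL n).add (hFL k)) ((hmidInt n k).const_mul 2)
      have e2 : ∫ z, (F n z * Real.log (F n z) + F k z * Real.log (F k z)) ∂ν
          = (∫ z, F n z * Real.log (F n z) ∂ν) + ∫ z, F k z * Real.log (F k z) ∂ν :=
        integral_add (hFL n) (hFL k)
      have e3 : ∫ z, 2 * (((F n z + F k z)/2) * Real.log ((F n z + F k z)/2)) ∂ν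
          = 2 * ∫ z, (((F n z + F k z)/2) * Real.log ((F n z + F k z)/2)) ∂ν :=
        integral_const_mul 2 _
      have h1 := hK n
      have h2 := hK k
      have h3 := hmid n k
      simp only [hε_def] at *
      linarith
    calc ∫⁻ z, ENNReal.ofReal ((g n z - g k z) ^ 2) ∂ν ≤ ENNReal.ofReal (∫ z, 2 * h z ∂ν) :=
          step1.trans step2.le
      _ ≤ ENNReal.ofReal (2 * (ε n + ε k)) := ENNReal.ofReal_le_ofReal step3
  -- `g n` are in L²
  have hg2 : ∀ n, MemLp (g n) 2 ν := by
    intro n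
    refine (memLp_two_iff_integrable_sq (hgm n).aestronglyMeasurable).mpr ?_
    rw [show (fun z => g n z ^ 2) = F n from funext (hg_sq n)]
    exact hFi n
  haveI : Fact ((1:ℝ≥0∞) ≤ 2) := ⟨one_le_two⟩
  set G : ℕ → Lp ℝ 2 ν := fun n => (hg2 n).toLp (g n) with hG_def
  have hGcoe : ∀ n, ⇑(G n) =ᵐ[ν] g n := fun n => (hg2 n).coeFn_toLp
  -- distances
  have hdist : ∀ n k, dist (G n) (G k) ≤ Real.sqrt (2 * (ε n + ε k)) := by
    intro n k
    rw [Lp.dist_def]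
    have hcong : eLpNorm (⇑(G n) - ⇑(G k)) 2 ν = eLpNorm (fun z => g n z - g k z) 2 ν :=
      eLpNorm_congr_ae ((hGcoe n).sub (hGcoe k))
    rw [hcong, eLpNorm_two_eq]
    have hle : (∫⁻ z, ENNReal.ofReal ((g n z - g k z) ^ 2) ∂ν) ^ (1/2 : ℝ)
        ≤ (ENNReal.ofReal (2 * (ε n + ε k))) ^ (1/2 : ℝ) :=
      ENNReal.rpow_le_rpow (hCauchyEst n k) (by norm_num)
    have htop : (ENNReal.ofReal (2 * (ε n + ε k))) ^ (1/2 : ℝ) ≠ ∞ := by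
      exact ENNReal.rpow_ne_top_of_nonneg (by norm_num) ENNReal.ofReal_ne_top
    calc (((∫⁻ z, ENNReal.ofReal ((g n z - g k z) ^ 2) ∂ν) ^ (1/2 : ℝ))).toReal
        ≤ ((ENNReal.ofReal (2 * (ε n + ε k))) ^ (1/2 : ℝ)).toReal :=
          ENNReal.toReal_mono htop hle
      _ = Real.sqrt (2 * (ε n + ε k)) := by
          rw [← ENNReal.toReal_rpow, ENNReal.toReal_ofReal (by positivity),
            Real.sqrt_eq_rpow]
  -- Cauchy sequence
  have hεmono : ∀ N n, N ≤ n → ε n ≤ ε N := by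
    intro N n hNn
    apply one_div_le_one_div_of_le (by positivity)
    have : (N:ℝ) ≤ n := Nat.cast_le.mpr hNn
    linarith
  have hcauchy : CauchySeq G := by
    refine cauchySeq_of_le_tendsto_0 (fun N => Real.sqrt (2 * (ε N + ε N))) ?_ ?_
    · intro n m N hNn hNm
      refine (hdist n m).trans (Real.sqrt_le_sqrt ?_)
      have h1 := hεmono N n hNn
      have h2 := hεmono N m hNm
      linarith
    · have hε0 : Tendsto ε atTop (𝓝 0) := tendsto_one_div_add_atTop_nhds_zero_nat
      have : Tendsto (fun N => 2 * (ε N + ε N)) atTop (𝓝 (2 * (0 + 0))) :=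
        (hε0.add hε0).const_mul 2
      simp only [add_zero, mul_zero] at this
      have := this.sqrt
      simpa using this
  obtain ⟨Glim, hGlim⟩ := cauchySeq_tendsto_of_complete hcauchy
  set gl : α → ℝ := ⇑Glim with hgl_def
  have hglm : Measurable gl := (Lp.stronglyMeasurable Glim).measurable
  set f : α → ℝ := fun z => gl z ^ 2 with hf_def
  have hfm : Measurable f := hglm.pow_const 2
  have hf0 : ∀ z, 0 ≤ f z := fun z => sq_nonneg _
  have hfInt : Integrable f ν :=
    (memLp_two_iff_integrable_sq (Lp.aestronglyMeasurable Glim)).mp (Lp.memLp Glim)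
  -- L² convergence
  have hL2 : Tendsto (fun n => eLpNorm (fun z => g n z - gl z) 2 ν) atTop (𝓝 0) := by
    have h1 := (Lp.tendsto_Lp_iff_tendsto_eLpNorm' G Glim).mp hGlim
    refine h1.congr fun n => ?_
    exact eLpNorm_congr_ae ((hGcoe n).sub (EventuallyEq.refl _ _))
  -- L¹ convergence of `F n` to `f`
  have hQn1 : ∀ n, ∫⁻ z, ENNReal.ofReal (g n z ^ 2) ∂ν = 1 := by
    intro n
    have : ∫⁻ z, ENNReal.ofReal (g n z ^ 2) ∂ν = ENNReal.ofReal (∫ z, g n z ^ 2 ∂ν) := by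
      refine (ofReal_integral_eq_lintegral_ofReal ?_ (ae_of_all _ fun z => sq_nonneg _)).symm
      rw [show (fun z => g n z ^ 2) = F n from funext (hg_sq n)]; exact hFi n
    rw [this, show (fun z => g n z ^ 2) = F n from funext (hg_sq n), hF1 n, ENNReal.ofReal_one]
  have heLp_g : ∀ n, eLpNorm (g n) 2 ν = 1 := by
    intro n
    rw [eLpNorm_two_eq, hQn1 n, ENNReal.one_rpow]
  have hgl_ne_top : eLpNorm gl 2 ν ≠ ∞ := (Lp.memLp Glim).eLpNorm_ne_top
  set C : ℝ≥0∞ := 1 + eLpNorm gl 2 ν with hC_def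
  have hC_ne_top : C ≠ ∞ := by
    simp only [hC_def, Ne, ENNReal.add_eq_top, not_or]
    exact ⟨ENNReal.one_ne_top, hgl_ne_top⟩
  have hAE_bound : ∀ n, (∫⁻ z, ENNReal.ofReal |F n z - f z| ∂ν)
      ≤ eLpNorm (fun z => g n z - gl z) 2 ν * C := by
    intro n
    have hfact : ∀ z, ENNReal.ofReal |F n z - f z|
        = ENNReal.ofReal |g n z - gl z| * ENNReal.ofReal |g n z + gl z| := by
      intro z
      rw [← ENNReal.ofReal_mul (abs_nonneg _), ← abs_mul]
      congr 1
      rw [← hg_sq n z, hf_def]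
      ring_nf
    have hHolder : (∫⁻ z, ENNReal.ofReal |g n z - gl z| * ENNReal.ofReal |g n z + gl z| ∂ν)
        ≤ (∫⁻ z, ENNReal.ofReal |g n z - gl z| ^ (2:ℝ) ∂ν) ^ (1/(2:ℝ))
          * (∫⁻ z, ENNReal.ofReal |g n z + gl z| ^ (2:ℝ) ∂ν) ^ (1/(2:ℝ)) := by
      exact ENNReal.lintegral_mul_le_Lp_mul_Lq ν (Real.holderConjugate_iff.mpr ⟨by norm_num,
          by norm_num⟩)
        (((hgm n).sub hglm).abs.ennreal_ofReal.aemeasurable)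
        (((hgm n).add hglm).abs.ennreal_ofReal.aemeasurable)
    have he1 : (∫⁻ z, ENNReal.ofReal |g n z - gl z| ^ (2:ℝ) ∂ν) ^ (1/(2:ℝ))
        = eLpNorm (fun z => g n z - gl z) 2 ν := by
      rw [eLpNorm_two_eq]
      congr 1
      exact lintegral_congr fun z => ofReal_abs_rpow_two _
    have he2 : (∫⁻ z, ENNReal.ofReal |g n z + gl z| ^ (2:ℝ) ∂ν) ^ (1/(2:ℝ))
        = eLpNorm (fun z => g n z + gl z) 2 ν := by
      rw [eLpNorm_two_eq]
      congr 1
      exact lintegral_congr fun z => ofReal_abs_rpow_two _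
    have he3 : eLpNorm (fun z => g n z + gl z) 2 ν ≤ C := by
      rw [hC_def, ← heLp_g n]
      exact eLpNorm_add_le (hgm n).aestronglyMeasurable (Lp.aestronglyMeasurable Glim)
        one_le_two
    calc (∫⁻ z, ENNReal.ofReal |F n z - f z| ∂ν)
        = ∫⁻ z, ENNReal.ofReal |g n z - gl z| * ENNReal.ofReal |g n z + gl z| ∂ν :=
          lintegral_congr fun z => hfact z
      _ ≤ (∫⁻ z, ENNReal.ofReal |g n z - gl z| ^ (2:ℝ) ∂ν) ^ (1/(2:ℝ))
          * (∫⁻ z, ENNReal.ofReal |g n z + gl z| ^ (2:ℝ) ∂ν) ^ (1/(2:ℝ)) := hHolder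
      _ ≤ eLpNorm (fun z => g n z - gl z) 2 ν * C := by
          rw [he1, he2]
          exact mul_le_mul_right he3 _
  have hAE : Tendsto (fun n => ∫⁻ z, ENNReal.ofReal |F n z - f z| ∂ν) atTop (𝓝 0) := by
    have hmul : Tendsto (fun n => eLpNorm (fun z => g n z - gl z) 2 ν * C) atTop (𝓝 0) := by
      have := ENNReal.Tendsto.mul_const hL2 (Or.inr hC_ne_top)
      simpa using this
    exact tendsto_of_tendsto_of_tendsto_of_le_of_le tendsto_const_nhds hmul
      (fun n => zero_le) hAE_bound
  -- toReal version of the L¹ convergence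
  have hAEr : Tendsto (fun n => ∫ z, |F n z - f z| ∂ν) atTop (𝓝 0) := by
    have heq : ∀ n, ∫ z, |F n z - f z| ∂ν
        = (∫⁻ z, ENNReal.ofReal |F n z - f z| ∂ν).toReal := by
      intro n
      rw [integral_eq_lintegral_of_nonneg_ae (f := fun z => |F n z - f z|)
        (ae_of_all _ fun z => abs_nonneg _)
        ((hFm n).sub hfm).abs.aestronglyMeasurable]
    simp only [heq]
    have := (ENNReal.tendsto_toReal (by simp : (0:ℝ≥0∞) ≠ ∞)).comp hAE
    simpa [Function.comp_def] using this
  -- total mass of `f` is 1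
  have hfint1 : ∫ z, f z ∂ν = 1 := by
    have habs : ∀ n, |∫ z, f z ∂ν - 1| ≤ ∫ z, |F n z - f z| ∂ν := by
      intro n
      have h1 : ∫ z, f z ∂ν - 1 = ∫ z, (f z - F n z) ∂ν := by
        rw [integral_sub hfInt (hFi n), hF1 n]
      rw [h1]
      calc |∫ z, (f z - F n z) ∂ν| ≤ ∫ z, |f z - F n z| ∂ν := by
            simpa [Real.norm_eq_abs] using
              norm_integral_le_integral_norm (μ := ν) (f := fun z => f z - F n z)
        _ = ∫ z, |F n z - f z| ∂ν := by
            congr 1; funext z; rw [abs_sub_comm]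
    have := ge_of_tendsto' hAEr habs
    have habs0 : |∫ z, f z ∂ν - 1| ≤ 0 := this
    have := abs_nonneg (∫ z, f z ∂ν - 1)
    have : |∫ z, f z ∂ν - 1| = 0 := le_antisymm habs0 this
    rw [abs_eq_zero] at this
    linarith
  -- a.e. convergent subsequence
  have hconvMeas : TendstoInMeasure ν (fun n => g n) atTop gl := by
    refine tendstoInMeasure_of_tendsto_eLpNorm (by norm_num : (2:ℝ≥0∞) ≠ 0)
      (fun n => (hgm n).aestronglyMeasurable) (Lp.aestronglyMeasurable Glim) ?_
    exact hL2
  obtain ⟨ns, hns_mono, hae⟩ := hconvMeas.exists_seq_tendsto_ae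
  -- Fatou for the entropy
  set φ : ℝ → ℝ := fun x => x * Real.log x - x + 1 with hφ_def
  have hφcont : Continuous φ := by
    exact (Real.continuous_mul_log.sub continuous_id).add continuous_const
  have hφ0 : ∀ x, 0 ≤ x → 0 ≤ φ x := fun x hx => by
    have := mul_log_ge_sub_one hx; simp only [hφ_def]; linarith
  have hφFInt : ∀ n, Integrable (fun z => φ (F n z)) ν := fun n =>
    ((hFL n).sub (hFi n)).add (integrable_const 1)
  have hφFval : ∀ n, ∫ z, φ (F n z) ∂ν ≤ R + ε n := by
    intro n
    have e1 : ∫ z, φ (F n z) ∂ν = (∫ z, (F n z * Real.log (F n z) - F n z) ∂ν)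
        + ∫ _z, (1:ℝ) ∂ν := integral_add ((hFL n).sub (hFi n)) (integrable_const 1)
    have e2 : ∫ z, (F n z * Real.log (F n z) - F n z) ∂ν
        = (∫ z, F n z * Real.log (F n z) ∂ν) - ∫ z, F n z ∂ν := integral_sub (hFL n) (hFi n)
    have e3 : ∫ _z, (1:ℝ) ∂ν = 1 := by
      simp [measure_univ]
    have := hK n
    have h4 := hF1 n
    simp only [hε_def] at *
    rw [e1, e2, e3, h4]
    linarith
  have hfae : ∀ᵐ z ∂ν, Tendsto (fun j => F (ns j) z) atTop (𝓝 (f z)) := by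
    filter_upwards [hae] with z hz
    have : Tendsto (fun j => g (ns j) z ^ 2) atTop (𝓝 (gl z ^ 2)) := hz.pow 2
    simpa only [hg_sq] using this
  have hphi_fatou : ∫⁻ z, ENNReal.ofReal (φ (f z)) ∂ν ≤ ENNReal.ofReal R := by
    have hptwise : ∀ᵐ z ∂ν, ENNReal.ofReal (φ (f z))
        = Filter.liminf (fun j => ENNReal.ofReal (φ (F (ns j) z))) atTop := by
      filter_upwards [hfae] with z hz
      have h1 : Tendsto (fun j => φ (F (ns j) z)) atTop (𝓝 (φ (f z))) :=
        (hφcont.tendsto _).comp hz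
      have h2 : Tendsto (fun j => ENNReal.ofReal (φ (F (ns j) z))) atTop
          (𝓝 (ENNReal.ofReal (φ (f z)))) :=
        (ENNReal.continuous_ofReal.tendsto _).comp h1
      exact h2.liminf_eq.symm
    calc ∫⁻ z, ENNReal.ofReal (φ (f z)) ∂ν
        = ∫⁻ z, Filter.liminf (fun j => ENNReal.ofReal (φ (F (ns j) z))) atTop ∂ν :=
          lintegral_congr_ae hptwise
      _ ≤ Filter.liminf (fun j => ∫⁻ z, ENNReal.ofReal (φ (F (ns j) z)) ∂ν) atTop := by
          refine lintegral_liminf_le fun j => ?_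
          exact (hφcont.measurable.comp (hFm (ns j))).ennreal_ofReal
      _ ≤ ENNReal.ofReal R := by
          have hval : ∀ j, ∫⁻ z, ENNReal.ofReal (φ (F (ns j) z)) ∂ν
              ≤ ENNReal.ofReal (R + ε (ns j)) := by
            intro j
            rw [← ofReal_integral_eq_lintegral_ofReal (hφFInt (ns j))
              (ae_of_all _ fun z => hφ0 _ (hF0 _ z))]
            exact ENNReal.ofReal_le_ofReal (hφFval (ns j))
          have hlim : Tendsto (fun j => ENNReal.ofReal (R + ε (ns j))) atTop
              (𝓝 (ENNReal.ofReal R)) := by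
            have hεns : Tendsto (fun j => ε (ns j)) atTop (𝓝 0) :=
              tendsto_one_div_add_atTop_nhds_zero_nat.comp hns_mono.tendsto_atTop
            have : Tendsto (fun j => R + ε (ns j)) atTop (𝓝 (R + 0)) :=
              tendsto_const_nhds.add hεns
            rw [add_zero] at this
            exact (ENNReal.continuous_ofReal.tendsto _).comp this
          calc Filter.liminf (fun j => ∫⁻ z, ENNReal.ofReal (φ (F (ns j) z)) ∂ν) atTop
              ≤ Filter.liminf (fun j => ENNReal.ofReal (R + ε (ns j))) atTop :=
                Filter.liminf_le_liminf (Filter.Eventually.of_forall hval)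
            _ = ENNReal.ofReal R := hlim.liminf_eq
  -- integrability of `φ ∘ f` and of `f log f`
  have hφfInt : Integrable (fun z => φ (f z)) ν := by
    refine ⟨(hφcont.measurable.comp hfm).aestronglyMeasurable, ?_⟩
    rw [hasFiniteIntegral_iff_norm]
    have : ∀ z, ENNReal.ofReal ‖φ (f z)‖ = ENNReal.ofReal (φ (f z)) := by
      intro z
      rw [Real.norm_eq_abs, abs_of_nonneg (hφ0 _ (hf0 z))]
    calc ∫⁻ z, ENNReal.ofReal ‖φ (f z)‖ ∂ν = ∫⁻ z, ENNReal.ofReal (φ (f z)) ∂ν :=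
          lintegral_congr fun z => this z
      _ ≤ ENNReal.ofReal R := hphi_fatou
      _ < ∞ := ENNReal.ofReal_lt_top
  have hflogfInt : Integrable (fun z => f z * Real.log (f z)) ν := by
    have : (fun z => f z * Real.log (f z)) = fun z => (φ (f z) + f z) - 1 := by
      funext z; simp only [hφ_def]; ring
    rw [this]
    exact (hφfInt.add hfInt).sub (integrable_const 1)
  have hflogf_le : ∫ z, f z * Real.log (f z) ∂ν ≤ R := by
    have h1 : ∫ z, f z * Real.log (f z) ∂ν = (∫ z, φ (f z) ∂ν) + (∫ z, f z ∂ν) - 1 := by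
      have : (fun z => f z * Real.log (f z)) = fun z => (φ (f z) + f z) - 1 := by
        funext z; simp only [hφ_def]; ring
      have e1 : ∫ z, ((φ (f z) + f z) - 1) ∂ν = (∫ z, (φ (f z) + f z) ∂ν) - ∫ _z, (1:ℝ) ∂ν :=
        integral_sub (hφfInt.add hfInt) (integrable_const 1)
      have e2 : ∫ z, (φ (f z) + f z) ∂ν = (∫ z, φ (f z) ∂ν) + ∫ z, f z ∂ν :=
        integral_add hφfInt hfInt
      have e3 : ∫ _z, (1:ℝ) ∂ν = 1 := by simp [measure_univ]
      rw [this, e1, e2, e3]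
    have h2 : ∫ z, φ (f z) ∂ν ≤ R := by
      have := ofReal_integral_eq_lintegral_ofReal hφfInt (ae_of_all _ fun z => hφ0 _ (hf0 z))
      have hle : ENNReal.ofReal (∫ z, φ (f z) ∂ν) ≤ ENNReal.ofReal R := this ▸ hphi_fatou
      have h3 : (0:ℝ) ≤ ∫ z, φ (f z) ∂ν := integral_nonneg fun z => hφ0 _ (hf0 z)
      rwa [ENNReal.ofReal_le_ofReal_iff hR] at hle
    rw [h1, hfint1]
    linarith
  exact ⟨f, hfm, hf0, hfInt, hfint1, hAE, hflogfInt, hflogf_le⟩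

lemma relEnt_props {α : Type*} [MeasurableSpace α] {W ν : Measure α} (h : relEnt W ν ≠ ∞) :
    W ≪ ν ∧ Integrable (llr W ν) W := by
  by_contra hc
  rw [relEnt, if_neg hc] at h
  exact h rfl

lemma relEnt_eq_of {α : Type*} [MeasurableSpace α] {W ν : Measure α}
    (hac : W ≪ ν) (hint : Integrable (llr W ν) W) :
    relEnt W ν = ENNReal.ofReal (∫ z, llr W ν z ∂W) := by
  rw [relEnt, if_pos ⟨hac, hint⟩]

lemma llr_integral_eq {α : Type*} [MeasurableSpace α] {W ν : Measure α}
    [IsFiniteMeasure W] [SigmaFinite ν] (hac : W ≪ ν) :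
    ∫ z, llr W ν z ∂W
      = ∫ z, (W.rnDeriv ν z).toReal * Real.log ((W.rnDeriv ν z).toReal) ∂ν := by
  rw [← MeasureTheory.integral_rnDeriv_smul hac (f := llr W ν)]
  simp only [llr_def, smul_eq_mul]

lemma llr_integrable_iff {α : Type*} [MeasurableSpace α] {W ν : Measure α}
    [IsFiniteMeasure W] [SigmaFinite ν] (hac : W ≪ ν) :
    Integrable (llr W ν) W ↔
      Integrable (fun z => (W.rnDeriv ν z).toReal * Real.log ((W.rnDeriv ν z).toReal)) ν := by
  rw [← MeasureTheory.integrable_rnDeriv_smul_iff hac (f := llr W ν)]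
  simp only [llr_def, smul_eq_mul]

lemma integral_mul_log_nonneg {α : Type*} [MeasurableSpace α] {ν : Measure α}
    [IsProbabilityMeasure ν] {f : α → ℝ} (hf0 : ∀ᵐ z ∂ν, 0 ≤ f z) (hfi : Integrable f ν)
    (hf1 : ∫ z, f z ∂ν = 1) (hfl : Integrable (fun z => f z * Real.log (f z)) ν) :
    0 ≤ ∫ z, f z * Real.log (f z) ∂ν := by
  have h1 : ∫ z, (f z - 1) ∂ν ≤ ∫ z, f z * Real.log (f z) ∂ν := by
    refine integral_mono_ae (hfi.sub (integrable_const 1)) hfl ?_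
    filter_upwards [hf0] with z hz
    exact mul_log_ge_sub_one hz
  rw [integral_sub hfi (integrable_const 1), hf1] at h1
  simpa using h1

lemma midpoint_mul_log_integrable {α : Type*} [MeasurableSpace α] {ν : Measure α}
    [IsFiniteMeasure ν] {u v : α → ℝ} (hu : Measurable u) (hv : Measurable v)
    (hu0 : ∀ z, 0 ≤ u z) (hv0 : ∀ z, 0 ≤ v z)
    (hul : Integrable (fun z => u z * Real.log (u z)) ν)
    (hvl : Integrable (fun z => v z * Real.log (v z)) ν) :
    Integrable (fun z => ((u z + v z)/2) * Real.log ((u z + v z)/2)) ν := by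
  refine Integrable.mono' (g := fun z =>
    (|u z * Real.log (u z)| + |v z * Real.log (v z)|) / 2 + 1)
    (((hul.abs.add hvl.abs).div_const 2).add (integrable_const 1))
    ?_ (ae_of_all _ fun z => abs_m_log_m_le (hu0 z) (hv0 z))
  have hm : Measurable fun z => (u z + v z) / 2 := (hu.add hv).div_const 2
  exact (hm.mul (Real.measurable_log.comp hm)).aestronglyMeasurable

lemma ereal_le_iff {x : ℝ≥0∞} {D : ℝ} (hD : 0 ≤ D) :
    ((x : EReal) ≤ ((D : ℝ) : EReal)) ↔ x ≤ ENNReal.ofReal D := by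
  have h : ((ENNReal.ofReal D : ℝ≥0∞) : EReal) = ((D : ℝ) : EReal) := by
    rw [EReal.coe_ennreal_ofReal, max_eq_left hD]
  rw [← h]
  exact EReal.coe_ennreal_le_coe_ennreal_iff

lemma ennreal_le_of_le_add {a b : ℝ≥0∞} {A : ℕ → ℝ≥0∞} (hA : Filter.Tendsto A atTop (𝓝 0))
    (h : ∀ n, a ≤ b + A n) : a ≤ b := by
  refine ENNReal.le_of_forall_pos_le_add fun ε hε hb => ?_
  have hev : ∀ᶠ n in atTop, A n < (ε : ℝ≥0∞) :=
    hA.eventually_lt_const (by exact_mod_cast hε)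
  obtain ⟨n, hn⟩ := hev.exists
  exact (h n).trans (add_le_add le_rfl hn.le)

/-- if `W(P,D)` is nonempty (and `D ≥ 0`), a minimizer of the
relative entropy over `W(P,D)` exists: `R(P,Q,D) = H(W‖P×Q)` for some `W ∈ W(P,D)`. -/
theorem stmt1 {S T : Type*} [MeasurableSpace S] [StandardBorelSpace S]
    [MeasurableSpace T] [StandardBorelSpace T]
    (ρ : S × T → ℝ) (hρm : Measurable ρ) (hρ0 : ∀ z, 0 ≤ ρ z)
    (P : Measure S) (Q : Measure T) [IsProbabilityMeasure P] [IsProbabilityMeasure Q]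
    (D : ℝ) (hD : 0 ≤ D) (hne : (distSet ρ P D).Nonempty) :
    ∃ W ∈ distSet ρ P D, Rrate ρ P Q D = relEnt W (P.prod Q) := by
  classical
  set ν : Measure (S × T) := P.prod Q with hν_def
  by_cases htop : Rrate ρ P Q D = ∞
  · obtain ⟨W0, hW0⟩ := hne
    refine ⟨W0, hW0, ?_⟩
    have hle : Rrate ρ P Q D ≤ relEnt W0 ν := by
      simp only [Rrate]
      exact iInf₂_le W0 hW0
    rw [htop] at hle ⊢
    exact (top_le_iff.mp hle).symm
  · set R : ℝ := (Rrate ρ P Q D).toReal with hR_def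
    have hR0 : 0 ≤ R := ENNReal.toReal_nonneg
    have hRb : Rrate ρ P Q D = ENNReal.ofReal R := (ENNReal.ofReal_toReal htop).symm
    -- the minimizing sequence
    have hexists : ∀ n : ℕ, ∃ W, W ∈ distSet ρ P D ∧
        relEnt W ν < ENNReal.ofReal (R + 1/(n+1)) := by
      intro n
      have hlt : Rrate ρ P Q D < ENNReal.ofReal (R + 1/(n+1)) := by
        rw [hRb]
        refine (ENNReal.ofReal_lt_ofReal_iff (by positivity)).mpr ?_
        have : (0:ℝ) < 1/(n+1) := by positivity
        linarith
      rw [Rrate] at hlt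
      simpa [iInf_lt_iff] using hlt
    choose Ws hWmem hWlt using hexists
    have hWprob : ∀ n, IsProbabilityMeasure (Ws n) := fun n => (hWmem n).1
    have hWfin : ∀ n, IsFiniteMeasure (Ws n) := fun n => haveI := hWprob n; inferInstance
    have hWprops : ∀ n, Ws n ≪ ν ∧ Integrable (llr (Ws n) ν) (Ws n) :=
      fun n => relEnt_props (hWlt n).ne_top
    have hWac : ∀ n, Ws n ≪ ν := fun n => (hWprops n).1
    set F : ℕ → (S × T) → ℝ := fun n z => ((Ws n).rnDeriv ν z).toReal with hF_def
    have hFm : ∀ n, Measurable (F n) :=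
      fun n => (Measure.measurable_rnDeriv _ _).ennreal_toReal
    have hF0 : ∀ n z, 0 ≤ F n z := fun n z => ENNReal.toReal_nonneg
    have hFi : ∀ n, Integrable (F n) ν := fun n =>
      haveI := hWfin n
      Measure.integrable_toReal_rnDeriv
    have hF1 : ∀ n, ∫ z, F n z ∂ν = 1 := by
      intro n
      haveI := hWprob n
      rw [hF_def]
      rw [Measure.integral_toReal_rnDeriv (hWac n)]
      simp [measure_univ]
    have hFL : ∀ n, Integrable (fun z => F n z * Real.log (F n z)) ν := by
      intro n
      haveI := hWfin n
      exact (llr_integrable_iff (hWac n)).mp (hWprops n).2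
    have hKval : ∀ n, ∫ z, llr (Ws n) ν z ∂(Ws n) = ∫ z, F n z * Real.log (F n z) ∂ν := by
      intro n
      haveI := hWfin n
      exact llr_integral_eq (hWac n)
    have hKnn : ∀ n, 0 ≤ ∫ z, F n z * Real.log (F n z) ∂ν := fun n =>
      integral_mul_log_nonneg (ae_of_all _ (hF0 n)) (hFi n) (hF1 n) (hFL n)
    have hK : ∀ n, ∫ z, F n z * Real.log (F n z) ∂ν ≤ R + 1/(n+1) := by
      intro n
      have h1 := hWlt n
      rw [relEnt_eq_of (hWac n) (hWprops n).2, hKval n] at h1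
      have := (ENNReal.ofReal_lt_ofReal_iff_of_nonneg (hKnn n)).mp h1
      linarith
    have hmap : ∀ n, (Ws n).map Prod.fst = P := fun n => (hWmem n).2.1
    have hdistW : ∀ n, ∫⁻ z, ENNReal.ofReal (ρ z) ∂(Ws n) ≤ ENNReal.ofReal D :=
      fun n => (ereal_le_iff hD).mp (hWmem n).2.2
    -- midpoint property
    have hmid : ∀ n k, R ≤ ∫ z, ((F n z + F k z)/2) * Real.log ((F n z + F k z)/2) ∂ν := by
      intro n k
      haveI := hWprob n; haveI := hWprob k
      set M : Measure (S × T) := (2⁻¹ : ℝ≥0∞) • (Ws n + Ws k) with hM_def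
      haveI hMprob : IsProbabilityMeasure M := by
        constructor
        rw [hM_def]
        simp only [Measure.smul_apply, Measure.add_apply, measure_univ, smul_eq_mul]
        rw [one_add_one_eq_two]
        exact ENNReal.inv_mul_cancel two_ne_zero ENNReal.ofNat_ne_top
      have hMac : M ≪ ν := by
        intro s hs
        rw [hM_def]
        simp only [Measure.smul_apply, Measure.add_apply, smul_eq_mul]
        rw [hWac n hs, hWac k hs]
        simp
      have hMd : (fun z => (M.rnDeriv ν z).toReal) =ᵐ[ν] fun z => (F n z + F k z)/2 := by
        have h1 : ((Ws n + Ws k)).rnDeriv ν =ᵐ[ν] (Ws n).rnDeriv ν + (Ws k).rnDeriv ν :=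
          Measure.rnDeriv_add (Ws n) (Ws k) ν
        have h2 : M.rnDeriv ν =ᵐ[ν] (2⁻¹ : ℝ≥0∞) • ((Ws n + Ws k)).rnDeriv ν := by
          rw [hM_def]
          exact Measure.rnDeriv_smul_left_of_ne_top (Ws n + Ws k) ν
            (by simp : (2⁻¹:ℝ≥0∞) ≠ ∞)
        filter_upwards [h1, h2, Measure.rnDeriv_lt_top (Ws n) ν, Measure.rnDeriv_lt_top (Ws k) ν]
          with z e1 e2 l1 l2
        rw [e2]
        simp only [Pi.smul_apply, smul_eq_mul]
        rw [e1]
        simp only [Pi.add_apply]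
        rw [ENNReal.toReal_mul, ENNReal.toReal_add l1.ne l2.ne]
        simp only [hF_def]
        rw [show ((2:ℝ≥0∞)⁻¹).toReal = 2⁻¹ by simp]
        ring
      have hMmem : M ∈ distSet ρ P D := by
        refine ⟨hMprob, ?_, ?_⟩
        · rw [hM_def, Measure.map_smul, Measure.map_add _ _ measurable_fst, hmap n, hmap k]
          rw [show ((2:ℝ≥0∞)⁻¹ • (P + P)) = (2⁻¹ + 2⁻¹ : ℝ≥0∞) • P by
            rw [smul_add, add_smul]]
          rw [ENNReal.inv_two_add_inv_two, one_smul]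
        · rw [ereal_le_iff hD, hM_def, lintegral_smul_measure, lintegral_add_measure]
          calc (2⁻¹:ℝ≥0∞) * (∫⁻ z, ENNReal.ofReal (ρ z) ∂(Ws n)
                + ∫⁻ z, ENNReal.ofReal (ρ z) ∂(Ws k))
              ≤ 2⁻¹ * (ENNReal.ofReal D + ENNReal.ofReal D) :=
                mul_le_mul_right (add_le_add (hdistW n) (hdistW k)) _
            _ = ENNReal.ofReal D := by
                rw [← mul_two, mul_comm (2⁻¹:ℝ≥0∞), mul_assoc,
                  ENNReal.mul_inv_cancel two_ne_zero ENNReal.ofNat_ne_top, mul_one]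
      have hMlow : Rrate ρ P Q D ≤ relEnt M ν := by
        simp only [Rrate]
        exact iInf₂_le M hMmem
      have hmli : Integrable (fun z => ((F n z + F k z)/2) * Real.log ((F n z + F k z)/2)) ν :=
        midpoint_mul_log_integrable (hFm n) (hFm k) (hF0 n) (hF0 k) (hFL n) (hFL k)
      have hMdlog : (fun z => (M.rnDeriv ν z).toReal * Real.log ((M.rnDeriv ν z).toReal))
          =ᵐ[ν] fun z => ((F n z + F k z)/2) * Real.log ((F n z + F k z)/2) := by
        filter_upwards [hMd] with z e
        rw [e]
      have hMint : Integrable (llr M ν) M := by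
        rw [llr_integrable_iff hMac]
        exact hmli.congr hMdlog.symm
      have hMval : ∫ z, llr M ν z ∂M
          = ∫ z, ((F n z + F k z)/2) * Real.log ((F n z + F k z)/2) ∂ν :=
        (llr_integral_eq hMac).trans (integral_congr_ae hMdlog)
      have hmidInt : Integrable (fun z => (F n z + F k z)/2) ν :=
        ((hFi n).add (hFi k)).div_const 2
      have hmid1 : ∫ z, (F n z + F k z)/2 ∂ν = 1 := by
        rw [integral_div, integral_add (hFi n) (hFi k), hF1 n, hF1 k]
        norm_num
      have hnn : 0 ≤ ∫ z, ((F n z + F k z)/2) * Real.log ((F n z + F k z)/2) ∂ν :=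
        integral_mul_log_nonneg (ae_of_all _ fun z => by positivity) hmidInt hmid1 hmli
      rw [relEnt_eq_of hMac hMint, hMval, hRb] at hMlow
      exact (ENNReal.ofReal_le_ofReal_iff hnn).mp hMlow
    -- the limit density
    obtain ⟨f, hfm, hf0, hfi, hf1, hAE, hfl, hfle⟩ :=
      density_limit ν F R hR0 hFm hF0 hFi hF1 hFL hK hmid
    set AE : ℕ → ℝ≥0∞ := fun n => ∫⁻ z, ENNReal.ofReal |F n z - f z| ∂ν with hAE_def
    set Wl : Measure (S × T) := ν.withDensity (fun z => ENNReal.ofReal (f z)) with hWl_def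
    have hWl_ac : Wl ≪ ν := withDensity_absolutelyContinuous _ _
    have hWl_rn : Wl.rnDeriv ν =ᵐ[ν] fun z => ENNReal.ofReal (f z) :=
      Measure.rnDeriv_withDensity ν hfm.ennreal_ofReal
    have hWl_f : (fun z => (Wl.rnDeriv ν z).toReal) =ᵐ[ν] f := by
      filter_upwards [hWl_rn] with z e
      rw [e, ENNReal.toReal_ofReal (hf0 z)]
    haveI hWl_prob : IsProbabilityMeasure Wl := by
      constructor
      rw [hWl_def, withDensity_apply _ MeasurableSet.univ, Measure.restrict_univ,
        ← ofReal_integral_eq_lintegral_ofReal hfi (ae_of_all _ hf0), hf1, ENNReal.ofReal_one]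
    have hWl_apply : ∀ s, MeasurableSet s → Wl s = ∫⁻ z in s, ENNReal.ofReal (f z) ∂ν :=
      fun s hs => withDensity_apply _ hs
    have hWn_apply : ∀ n s, MeasurableSet s →
        Ws n s = ∫⁻ z in s, ENNReal.ofReal (F n z) ∂ν := by
      intro n s hs
      conv_lhs => rw [← Measure.withDensity_rnDeriv_eq _ _ (hWac n)]
      rw [withDensity_apply _ hs]
      refine lintegral_congr_ae (ae_restrict_of_ae ?_)
      filter_upwards [Measure.rnDeriv_lt_top (Ws n) ν] with z l
      rw [hF_def, ENNReal.ofReal_toReal l.ne]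
    have hptle1 : ∀ n z, ENNReal.ofReal (f z)
        ≤ ENNReal.ofReal (F n z) + ENNReal.ofReal |F n z - f z| := by
      intro n z
      refine le_trans (ENNReal.ofReal_le_ofReal ?_) ENNReal.ofReal_add_le
      have := abs_nonneg (F n z - f z)
      have h2 := le_abs_self (f z - F n z)
      rw [abs_sub_comm] at h2
      linarith
    have hptle2 : ∀ n z, ENNReal.ofReal (F n z)
        ≤ ENNReal.ofReal (f z) + ENNReal.ofReal |F n z - f z| := by
      intro n z
      refine le_trans (ENNReal.ofReal_le_ofReal ?_) ENNReal.ofReal_add_le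
      have h2 := le_abs_self (F n z - f z)
      linarith
    -- marginal of the limit
    have hmapWl : Wl.map Prod.fst = P := by
      refine Measure.ext fun A hA => ?_
      rw [Measure.map_apply measurable_fst hA]
      have hs : MeasurableSet (Prod.fst ⁻¹' A : Set (S × T)) := measurable_fst hA
      have hPA : ∀ n, Ws n (Prod.fst ⁻¹' A) = P A := by
        intro n
        rw [← hmap n, Measure.map_apply measurable_fst hA]
      have hAErest : ∀ n, ∫⁻ z in Prod.fst ⁻¹' A, ENNReal.ofReal |F n z - f z| ∂ν ≤ AE n :=
        fun n => lintegral_mono' Measure.restrict_le_self le_rfl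
      have h1 : ∀ n, Wl (Prod.fst ⁻¹' A) ≤ P A + AE n := by
        intro n
        calc Wl (Prod.fst ⁻¹' A) = ∫⁻ z in Prod.fst ⁻¹' A, ENNReal.ofReal (f z) ∂ν :=
              hWl_apply _ hs
          _ ≤ ∫⁻ z in Prod.fst ⁻¹' A,
              (ENNReal.ofReal (F n z) + ENNReal.ofReal |F n z - f z|) ∂ν :=
              lintegral_mono fun z => hptle1 n z
          _ = (∫⁻ z in Prod.fst ⁻¹' A, ENNReal.ofReal (F n z) ∂ν)
              + ∫⁻ z in Prod.fst ⁻¹' A, ENNReal.ofReal |F n z - f z| ∂ν :=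
              lintegral_add_left ((hFm n).ennreal_ofReal) _
          _ ≤ Ws n (Prod.fst ⁻¹' A) + AE n := by
              rw [hWn_apply n _ hs]
              exact add_le_add le_rfl (hAErest n)
          _ = P A + AE n := by rw [hPA n]
      have h2 : ∀ n, P A ≤ Wl (Prod.fst ⁻¹' A) + AE n := by
        intro n
        calc P A = Ws n (Prod.fst ⁻¹' A) := (hPA n).symm
          _ = ∫⁻ z in Prod.fst ⁻¹' A, ENNReal.ofReal (F n z) ∂ν := hWn_apply n _ hs
          _ ≤ ∫⁻ z in Prod.fst ⁻¹' A,
              (ENNReal.ofReal (f z) + ENNReal.ofReal |F n z - f z|) ∂ν :=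
              lintegral_mono fun z => hptle2 n z
          _ = (∫⁻ z in Prod.fst ⁻¹' A, ENNReal.ofReal (f z) ∂ν)
              + ∫⁻ z in Prod.fst ⁻¹' A, ENNReal.ofReal |F n z - f z| ∂ν :=
              lintegral_add_left (hfm.ennreal_ofReal) _
          _ ≤ Wl (Prod.fst ⁻¹' A) + AE n := by
              rw [hWl_apply _ hs]
              exact add_le_add le_rfl (hAErest n)
      exact le_antisymm (ennreal_le_of_le_add hAE h1) (ennreal_le_of_le_add hAE h2)
    -- distortion constraint of the limit
    have hdistWl : ∫⁻ z, ENNReal.ofReal (ρ z) ∂Wl ≤ ENNReal.ofReal D := by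
      have htrunc : ∀ m : ℕ,
          ∫⁻ z, min (ENNReal.ofReal (ρ z)) m ∂Wl ≤ ENNReal.ofReal D := by
        intro m
        have hminm : Measurable fun z => min (ENNReal.ofReal (ρ z)) (m : ℝ≥0∞) :=
          (hρm.ennreal_ofReal).min measurable_const
        refine ennreal_le_of_le_add (A := fun n => (m : ℝ≥0∞) * AE n) ?_ ?_
        · have := ENNReal.Tendsto.const_mul hAE (Or.inr (by simp : (m:ℝ≥0∞) ≠ ∞))
          simpa using this
        · intro n
          have eWl : ∫⁻ z, min (ENNReal.ofReal (ρ z)) m ∂Wl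
              = ∫⁻ z, ENNReal.ofReal (f z) * min (ENNReal.ofReal (ρ z)) m ∂ν := by
            rw [hWl_def, lintegral_withDensity_eq_lintegral_mul ν hfm.ennreal_ofReal hminm]
            rfl
          have eWn : ∫⁻ z, min (ENNReal.ofReal (ρ z)) m ∂(Ws n)
              = ∫⁻ z, ENNReal.ofReal (F n z) * min (ENNReal.ofReal (ρ z)) m ∂ν := by
            conv_lhs => rw [← Measure.withDensity_rnDeriv_eq _ _ (hWac n)]
            rw [lintegral_withDensity_eq_lintegral_mul ν (Measure.measurable_rnDeriv _ _) hminm]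
            refine lintegral_congr_ae ?_
            filter_upwards [Measure.rnDeriv_lt_top (Ws n) ν] with z l
            simp only [Pi.mul_apply]
            rw [hF_def, ENNReal.ofReal_toReal l.ne]
          have hpt : ∀ z, ENNReal.ofReal (f z) * min (ENNReal.ofReal (ρ z)) m
              ≤ ENNReal.ofReal (F n z) * min (ENNReal.ofReal (ρ z)) m
                + (m : ℝ≥0∞) * ENNReal.ofReal |F n z - f z| := by
            intro z
            calc ENNReal.ofReal (f z) * min (ENNReal.ofReal (ρ z)) m
                ≤ (ENNReal.ofReal (F n z) + ENNReal.ofReal |F n z - f z|)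
                  * min (ENNReal.ofReal (ρ z)) m :=
                  mul_le_mul_left (hptle1 n z) _
              _ = ENNReal.ofReal (F n z) * min (ENNReal.ofReal (ρ z)) m
                  + ENNReal.ofReal |F n z - f z| * min (ENNReal.ofReal (ρ z)) m := by
                  rw [add_mul]
              _ ≤ ENNReal.ofReal (F n z) * min (ENNReal.ofReal (ρ z)) m
                  + (m : ℝ≥0∞) * ENNReal.ofReal |F n z - f z| := by
                  refine add_le_add le_rfl ?_
                  rw [mul_comm]
                  exact mul_le_mul_left (min_le_right _ _) _
          calc ∫⁻ z, min (ENNReal.ofReal (ρ z)) m ∂Wl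
              = ∫⁻ z, ENNReal.ofReal (f z) * min (ENNReal.ofReal (ρ z)) m ∂ν := eWl
            _ ≤ ∫⁻ z, (ENNReal.ofReal (F n z) * min (ENNReal.ofReal (ρ z)) m
                + (m : ℝ≥0∞) * ENNReal.ofReal |F n z - f z|) ∂ν :=
                lintegral_mono fun z => hpt z
            _ = (∫⁻ z, ENNReal.ofReal (F n z) * min (ENNReal.ofReal (ρ z)) m ∂ν)
                + ∫⁻ z, (m : ℝ≥0∞) * ENNReal.ofReal |F n z - f z| ∂ν :=
                lintegral_add_left ((hFm n).ennreal_ofReal.mul hminm) _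
            _ ≤ ENNReal.ofReal D + (m : ℝ≥0∞) * AE n := by
                refine add_le_add ?_ ?_
                · rw [← eWn]
                  refine le_trans (lintegral_mono fun z => min_le_left _ _) (hdistW n)
                · rw [lintegral_const_mul _ (f := fun z => ENNReal.ofReal |F n z - f z|)
                      (((hFm n).sub hfm).abs.ennreal_ofReal)]
      have hmono : Monotone fun (m : ℕ) (z : S × T) => min (ENNReal.ofReal (ρ z)) (m : ℝ≥0∞) := by
        intro m m' h z
        exact min_le_min le_rfl (Nat.cast_le.mpr h)
      have hsup : ∀ z, (⨆ m : ℕ, min (ENNReal.ofReal (ρ z)) (m : ℝ≥0∞))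
          = ENNReal.ofReal (ρ z) := by
        intro z
        refine le_antisymm (iSup_le fun m => min_le_left _ _) ?_
        obtain ⟨m, hm⟩ := exists_nat_ge (ρ z)
        refine le_iSup_of_le m (le_of_eq ?_)
        rw [min_eq_left]
        calc ENNReal.ofReal (ρ z) ≤ ENNReal.ofReal (m : ℝ) := ENNReal.ofReal_le_ofReal hm
          _ = (m : ℝ≥0∞) := ENNReal.ofReal_natCast m
      have : ∫⁻ z, ENNReal.ofReal (ρ z) ∂Wl
          = ⨆ m : ℕ, ∫⁻ z, min (ENNReal.ofReal (ρ z)) (m : ℝ≥0∞) ∂Wl := by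
        rw [← lintegral_iSup (fun m => (hρm.ennreal_ofReal).min measurable_const) hmono]
        exact lintegral_congr fun z => (hsup z).symm
      rw [this]
      exact iSup_le htrunc
    have hWl_mem : Wl ∈ distSet ρ P D := ⟨hWl_prob, hmapWl, (ereal_le_iff hD).mpr hdistWl⟩
    -- relative entropy of the limit
    have hWlog : (fun z => (Wl.rnDeriv ν z).toReal * Real.log ((Wl.rnDeriv ν z).toReal))
        =ᵐ[ν] fun z => f z * Real.log (f z) := by
      filter_upwards [hWl_f] with z e
      rw [e]
    have hint : Integrable (llr Wl ν) Wl := by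
      rw [llr_integrable_iff hWl_ac]
      exact hfl.congr hWlog.symm
    have hval : ∫ z, llr Wl ν z ∂Wl = ∫ z, f z * Real.log (f z) ∂ν :=
      (llr_integral_eq hWl_ac).trans (integral_congr_ae hWlog)
    have hup : relEnt Wl ν ≤ Rrate ρ P Q D := by
      rw [relEnt_eq_of hWl_ac hint, hval, hRb]
      exact ENNReal.ofReal_le_ofReal hfle
    have hlow : Rrate ρ P Q D ≤ relEnt Wl ν := by
      simp only [Rrate]
      exact iInf₂_le Wl hWl_mem
    exact ⟨Wl, hWl_mem, le_antisymm hlow hup⟩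

end
end

section
/- For every probability measure W ∈ W(P,D), one has H(W ‖ P×Q) ≥ Λ*(P,Q,D). -/
open MeasureTheory Filter Set Topology Classical
open scoped ENNReal NNReal

noncomputable section

/-- for every `W ∈ W(P,D)`, `H(W‖P×Q) ≥ Λ*(P,Q,D)`. -/
theorem stmt2 {S T : Type*} [MeasurableSpace S] [StandardBorelSpace S]
    [MeasurableSpace T] [StandardBorelSpace T]
    (ρ : S × T → ℝ) (hρm : Measurable ρ) (hρ0 : ∀ z, 0 ≤ ρ z)
    (P : Measure S) (Q : Measure T) [IsProbabilityMeasure P] [IsProbabilityMeasure Q]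
    (D : ℝ) (W : Measure (S × T)) (hW : W ∈ distSet ρ P D) :
    LamStar ρ P Q D ≤ ((relEnt W (P.prod Q) : ℝ≥0∞) : EReal) := by
  obtain ⟨hWprob, hWfst, hWD⟩ := hW
  haveI := hWprob
  set μ : Measure (S × T) := P.prod Q with hμdef
  by_cases hreg : W ≪ μ ∧ Integrable (llr W μ) W
  case neg =>
    rw [relEnt, if_neg hreg, EReal.coe_ennreal_top]
    exact le_top
  obtain ⟨hac, hint⟩ := hreg
  rw [relEnt, if_pos ⟨hac, hint⟩]
  set H : ℝ := ∫ z, llr W μ z ∂W with hHdef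
  -- facts about the distortion integral
  set I : ℝ≥0∞ := ∫⁻ z, ENNReal.ofReal (ρ z) ∂W with hIdef
  have hItop : I ≠ ∞ := by
    intro h
    rw [h, EReal.coe_ennreal_top, top_le_iff] at hWD
    exact EReal.coe_ne_top _ hWD
  have hIle : I.toReal ≤ D := by
    rw [← ENNReal.ofReal_toReal hItop, EReal.coe_ennreal_ofReal] at hWD
    exact le_trans (le_max_left _ _) (EReal.coe_le_coe_iff.mp hWD)
  have hρint : Integrable ρ W := by
    refine ⟨hρm.aestronglyMeasurable, ?_⟩
    rw [hasFiniteIntegral_iff_ofReal (ae_of_all _ hρ0)]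
    exact hItop.lt_top
  have hρval : ∫ z, ρ z ∂W = I.toReal := by
    rw [hIdef, integral_eq_lintegral_of_nonneg_ae (ae_of_all _ hρ0) hρm.aestronglyMeasurable]
  have hρle : ∫ z, ρ z ∂W ≤ D := hρval ▸ hIle
  rw [LamStar]
  refine iSup₂_le fun l hl => ?_
  have hl' : l ≤ 0 := hl
  rcases lt_or_eq_of_le hl' with hl0 | hl0
  case' pos.inr =>
    -- case l = 0
    subst hl0
    have hone : ∀ x : S, (∫⁻ y, ENNReal.ofReal (Real.exp (0 * ρ (x, y))) ∂Q) = 1 := by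
      intro x; simp
    have hLam : Lam ρ P Q 0 = ((0 : ℝ≥0∞) : EReal) := by
      rw [Lam, if_pos le_rfl]
      congr 1
      rw [← lintegral_zero (μ := P)]
      refine lintegral_congr fun x => ?_
      rw [hone x, posLog, if_neg ENNReal.one_ne_top]
      simp
    rw [hLam]
    simp only [zero_mul, EReal.coe_ennreal_zero, EReal.coe_zero, sub_zero]
    exact EReal.coe_ennreal_nonneg _
  case' pos.inl =>
    -- case l < 0
    set g : S → ℝ≥0∞ := fun x => ∫⁻ y, ENNReal.ofReal (Real.exp (l * ρ (x, y))) ∂Q with hgdef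
    have hgm : Measurable g := by
      rw [hgdef]
      exact Measurable.lintegral_prod_right' ((hρm.const_mul l).exp.ennreal_ofReal)
    have hgle : ∀ x, g x ≤ 1 := by
      intro x
      calc g x ≤ ∫⁻ _, 1 ∂Q := by
            refine lintegral_mono fun y => ?_
            refine ENNReal.ofReal_le_one.mpr (Real.exp_le_one_iff.mpr ?_)
            exact mul_nonpos_iff.mpr (Or.inr ⟨hl0.le, hρ0 _⟩)
        _ = 1 := by simp
    have hgtop : ∀ x, g x ≠ ∞ := fun x => (lt_of_le_of_lt (hgle x) ENNReal.one_lt_top).ne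
    have hgpos : ∀ x, 0 < g x := by
      intro x
      rcases eq_or_ne (g x) 0 with h0 | h0
      · exfalso
        rw [hgdef] at h0
        have hme : Measurable fun y : T => ENNReal.ofReal (Real.exp (l * ρ (x, y))) := by
          fun_prop
        rw [lintegral_eq_zero_iff hme] at h0
        have hfalse : ∀ᵐ y ∂Q, False := by
          filter_upwards [h0] with y hy
          exact (ENNReal.ofReal_pos.mpr (Real.exp_pos _)).ne' hy
        have hQ0 : Q = 0 := MeasureTheory.ae_eq_bot.mp (Filter.eventually_false_iff_eq_bot.mp hfalse)
        exact (IsProbabilityMeasure.ne_zero Q) hQ0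
      · exact pos_iff_ne_zero.mpr h0
    set G : S → ℝ := fun x => -Real.log (g x).toReal with hGdef
    have hGm : Measurable G := (hgm.ennreal_toReal.log).neg
    have hgtpos : ∀ x, 0 < (g x).toReal := fun x =>
      ENNReal.toReal_pos (hgpos x).ne' (hgtop x)
    have hG0 : ∀ x, 0 ≤ G x := by
      intro x
      have : Real.log (g x).toReal ≤ 0 :=
        Real.log_nonpos ENNReal.toReal_nonneg (ENNReal.toReal_mono ENNReal.one_ne_top (hgle x))
      simpa [hGdef] using this
    have hGexp : ∀ x, Real.exp (G x) = ((g x).toReal)⁻¹ := by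
      intro x
      rw [hGdef]
      rw [Real.exp_neg, Real.exp_log (hgtpos x)]
    have hnegLog : ∀ x, negLog (g x) = ENNReal.ofReal (G x) := by
      intro x
      rw [negLog, if_neg (hgpos x).ne']
    -- the key inequality, for each truncation level M
    have key : ∀ M : ℕ, l * D + ∫ x, min (M : ℝ) (G x) ∂P ≤ H := by
      intro M
      set fM : S × T → ℝ := fun z => l * ρ z + min (M : ℝ) (G z.1) with hfMdef
      have hfMm : Measurable fM :=
        (hρm.const_mul l).add (measurable_const.min (hGm.comp measurable_fst))
      have hminm : Measurable fun x => min (M : ℝ) (G x) := measurable_const.min hGm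
      have hmin0 : ∀ x, 0 ≤ min (M : ℝ) (G x) := fun x => le_min (Nat.cast_nonneg M) (hG0 x)
      have hminint : Integrable (fun x => min (M : ℝ) (G x)) P := by
        refine (integrable_const (M : ℝ)).mono' hminm.aestronglyMeasurable (ae_of_all _ fun x => ?_)
        rw [Real.norm_eq_abs, abs_of_nonneg (hmin0 x)]
        exact min_le_left _ _
      have hminintW : Integrable (fun z : S × T => min (M : ℝ) (G z.1)) W := by
        refine (integrable_const (M : ℝ)).mono'
          ((hminm.comp measurable_fst).aestronglyMeasurable) (ae_of_all _ fun z => ?_)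
        rw [Real.norm_eq_abs, abs_of_nonneg (hmin0 z.1)]
        exact min_le_left _ _
      have hfMint : Integrable fM W := (hρint.const_mul l).add hminintW
      -- the exponential moment bound over μ
      have hEMle : ∫⁻ z, ENNReal.ofReal (Real.exp (fM z)) ∂μ ≤ 1 := by
        rw [hμdef, MeasureTheory.lintegral_prod _ (hfMm.exp.ennreal_ofReal.aemeasurable)]
        calc ∫⁻ x, ∫⁻ y, ENNReal.ofReal (Real.exp (fM (x, y))) ∂Q ∂P
            = ∫⁻ x, ENNReal.ofReal (Real.exp (min (M : ℝ) (G x))) * g x ∂P := by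
              refine lintegral_congr fun x => ?_
              rw [hgdef]
              have hme : Measurable fun y : T => ENNReal.ofReal (Real.exp (l * ρ (x, y))) := by
                fun_prop
              rw [← lintegral_const_mul _ hme]
              refine lintegral_congr fun y => ?_
              rw [← ENNReal.ofReal_mul (Real.exp_nonneg _), ← Real.exp_add]
              simp [hfMdef, add_comm]
          _ ≤ ∫⁻ _, 1 ∂P := by
              refine lintegral_mono fun x => ?_
              have h1 : Real.exp (min (M : ℝ) (G x)) ≤ ((g x).toReal)⁻¹ := by
                rw [← hGexp x]
                exact Real.exp_le_exp.mpr (min_le_right _ _)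
              calc ENNReal.ofReal (Real.exp (min (M : ℝ) (G x))) * g x
                  ≤ ENNReal.ofReal (((g x).toReal)⁻¹) * g x :=
                    mul_le_mul_left (ENNReal.ofReal_le_ofReal h1) _
                _ = (g x)⁻¹ * g x := by
                    rw [ENNReal.ofReal_inv_of_pos (hgtpos x), ENNReal.ofReal_toReal (hgtop x)]
                _ = 1 := ENNReal.inv_mul_cancel (hgpos x).ne' (hgtop x)
          _ = 1 := by simp
      -- the correction function h
      set w : S × T → ℝ := fun z => (W.rnDeriv μ z).toReal with hwdef
      have hwm : Measurable w := (Measure.measurable_rnDeriv W μ).ennreal_toReal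
      set hh : S × T → ℝ := fun z => Real.exp (fM z) * (w z)⁻¹ with hhdef
      have hhm : Measurable hh := hfMm.exp.mul hwm.inv
      have hh0 : ∀ z, 0 ≤ hh z := fun z =>
        mul_nonneg (Real.exp_nonneg _) (inv_nonneg.mpr ENNReal.toReal_nonneg)
      have hhlint : ∫⁻ z, ENNReal.ofReal (hh z) ∂W ≤ 1 := by
        rw [← MeasureTheory.lintegral_rnDeriv_mul hac hhm.ennreal_ofReal.aemeasurable]
        refine le_trans (lintegral_mono_ae ?_) hEMle
        filter_upwards [Measure.rnDeriv_lt_top W μ] with z hz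
        rcases eq_or_ne (W.rnDeriv μ z) 0 with h0 | h0
        · simp [h0]
        · have hwpos : 0 < w z := ENNReal.toReal_pos h0 hz.ne
          rw [hhdef]
          simp only
          rw [ENNReal.ofReal_mul (Real.exp_nonneg _), ENNReal.ofReal_inv_of_pos hwpos,
            hwdef]
          simp only
          rw [ENNReal.ofReal_toReal hz.ne, mul_comm, mul_assoc,
            ENNReal.inv_mul_cancel h0 hz.ne, mul_one]
      have hhint : Integrable hh W := by
        refine ⟨hhm.aestronglyMeasurable, ?_⟩
        rw [hasFiniteIntegral_iff_ofReal (ae_of_all _ hh0)]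
        exact lt_of_le_of_lt hhlint ENNReal.one_lt_top
      have hhval : ∫ z, hh z ∂W ≤ 1 := by
        rw [integral_eq_lintegral_of_nonneg_ae (ae_of_all _ hh0) hhm.aestronglyMeasurable]
        calc (∫⁻ z, ENNReal.ofReal (hh z) ∂W).toReal ≤ (1 : ℝ≥0∞).toReal :=
              ENNReal.toReal_mono ENNReal.one_ne_top hhlint
          _ = 1 := by simp
      -- pointwise inequality
      have hptw : ∀ᵐ z ∂W, fM z ≤ llr W μ z + (hh z - 1) := by
        filter_upwards [Measure.rnDeriv_pos hac, hac.ae_le (Measure.rnDeriv_lt_top W μ)]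
          with z hz0 hztop
        have hwpos : 0 < w z := ENNReal.toReal_pos hz0.ne' hztop.ne
        have hlog := Real.log_le_sub_one_of_pos
          (mul_pos (Real.exp_pos (fM z)) (inv_pos.mpr hwpos))
        rw [Real.log_mul (Real.exp_pos _).ne' (inv_pos.mpr hwpos).ne', Real.log_exp,
          Real.log_inv] at hlog
        have hllr : llr W μ z = Real.log (w z) := rfl
        have hhz : hh z = Real.exp (fM z) * (w z)⁻¹ := rfl
        rw [hllr, hhz]
        linarith
      -- integrate
      have hmono : ∫ z, fM z ∂W ≤ ∫ z, (llr W μ z + (hh z - 1)) ∂W :=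
        integral_mono_ae hfMint (hint.add (hhint.sub (integrable_const 1))) hptw
      have hsub : Integrable (fun z => hh z - 1) W := hhint.sub (integrable_const 1)
      have hsplit : ∫ z, (llr W μ z + (hh z - 1)) ∂W = H + (∫ z, hh z ∂W - 1) := by
        rw [integral_add hint hsub, integral_sub hhint (integrable_const 1)]
        simp [hHdef]
      have hfMval : ∫ z, fM z ∂W = l * (∫ z, ρ z ∂W) + ∫ x, min (M : ℝ) (G x) ∂P := by
        rw [hfMdef]
        simp only
        rw [integral_add (hρint.const_mul l) hminintW, integral_const_mul]
        congr 1
        rw [← hWfst, integral_map measurable_fst.aemeasurable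
          hminm.aestronglyMeasurable]
      have hlD : l * D ≤ l * ∫ z, ρ z ∂W := mul_le_mul_of_nonpos_left hρle hl0.le
      have := hmono
      rw [hfMval, hsplit] at this
      linarith
    -- deduce the bounds in ℝ≥0∞
    have hHlD : 0 ≤ H - l * D := by
      have h0 := key 0
      have hz : ∫ x, min ((0 : ℕ) : ℝ) (G x) ∂P = ∫ _x, (0 : ℝ) ∂P :=
        integral_congr_ae (ae_of_all _ fun x => by simpa using min_eq_left (hG0 x))
      rw [hz, integral_zero] at h0
      linarith
    set N : ℝ≥0∞ := ∫⁻ x, ENNReal.ofReal (G x) ∂P with hNdef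
    have hNle : N ≤ ENNReal.ofReal (H - l * D) := by
      have hsup : ∀ x, ENNReal.ofReal (G x) = ⨆ M : ℕ, ENNReal.ofReal (min (M : ℝ) (G x)) := by
        intro x
        refine le_antisymm ?_ (iSup_le fun M => ENNReal.ofReal_le_ofReal (min_le_right _ _))
        refine le_trans (le_of_eq ?_) (le_iSup (fun M : ℕ => ENNReal.ofReal (min (M : ℝ) (G x)))
          ⌈G x⌉₊)
        rw [min_eq_right (Nat.le_ceil _)]
      rw [hNdef]
      calc ∫⁻ x, ENNReal.ofReal (G x) ∂P
          = ∫⁻ x, ⨆ M : ℕ, ENNReal.ofReal (min (M : ℝ) (G x)) ∂P := lintegral_congr hsup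
        _ = ⨆ M : ℕ, ∫⁻ x, ENNReal.ofReal (min (M : ℝ) (G x)) ∂P := by
            refine lintegral_iSup (fun M => (measurable_const.min hGm).ennreal_ofReal) ?_
            intro M M' hMM' x
            exact ENNReal.ofReal_le_ofReal (min_le_min (Nat.cast_le.mpr hMM') le_rfl)
        _ ≤ ENNReal.ofReal (H - l * D) := by
            refine iSup_le fun M => ?_
            have hminint : Integrable (fun x => min (M : ℝ) (G x)) P := by
              refine (integrable_const (M : ℝ)).mono'
                (measurable_const.min hGm).aestronglyMeasurable (ae_of_all _ fun x => ?_)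
              rw [Real.norm_eq_abs, abs_of_nonneg (le_min (Nat.cast_nonneg M) (hG0 x))]
              exact min_le_left _ _
            rw [← ofReal_integral_eq_lintegral_ofReal hminint
              (ae_of_all _ fun x => le_min (Nat.cast_nonneg M) (hG0 x))]
            refine ENNReal.ofReal_le_ofReal ?_
            have := key M
            linarith
    have hNtop : N ≠ ∞ := (lt_of_le_of_lt hNle ENNReal.ofReal_lt_top).ne
    have hNreal : N.toReal ≤ H - l * D := by
      have := ENNReal.toReal_mono ENNReal.ofReal_ne_top hNle
      rwa [ENNReal.toReal_ofReal hHlD] at this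
    -- compute Lam and finish
    have hLam : Lam ρ P Q l = -((N : ℝ≥0∞) : EReal) := by
      rw [Lam, if_neg (not_le.mpr hl0)]
      congr 2
      exact lintegral_congr fun x => hnegLog x
    rw [hLam, sub_eq_add_neg, neg_neg]
    have hNcast : ((N : ℝ≥0∞) : EReal) = ((N.toReal : ℝ) : EReal) := by
      rw [← ENNReal.ofReal_toReal hNtop, EReal.coe_ennreal_ofReal,
        max_eq_left ENNReal.toReal_nonneg, ENNReal.ofReal_toReal hNtop]
    rw [hNcast, ← EReal.coe_add, EReal.coe_ennreal_ofReal]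
    refine EReal.coe_le_coe_iff.mpr ?_
    refine le_trans ?_ (le_max_left H 0)
    linarith

end
end

section
/- If D_min := inf{D : Λ*(P,Q,D) < ∞} is finite, then Λ*(P,Q,D_min) = E_X[ −log Q{y : ρ(X,y) = ρ_Q(X)} ]. -/
open MeasureTheory Filter Set Topology Classical
open scoped ENNReal NNReal

noncomputable section

/-! ### Auxiliary lemmas for `stmt6` -/

section NegLogAux

lemma negLog_one' : negLog 1 = 0 := by simp [negLog]

lemma measurable_negLog : Measurable negLog := by
  unfold negLog
  exact Measurable.ite (MeasurableSet.singleton 0) measurable_const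
    ((Real.measurable_log.comp ENNReal.measurable_toReal).neg.ennreal_ofReal)

lemma negLog_antitone : Antitone negLog := by
  intro a b hab
  unfold negLog
  rcases eq_or_ne a 0 with rfl | ha
  · simp
  · have hb : b ≠ 0 := fun h => ha (le_antisymm (h ▸ hab) (zero_le))
    rw [if_neg ha, if_neg hb]
    rcases eq_or_ne b ⊤ with rfl | hbt
    · simp
    · apply ENNReal.ofReal_le_ofReal
      apply neg_le_neg
      apply Real.log_le_log (ENNReal.toReal_pos ha (hab.trans_lt (lt_top_iff_ne_top.2 hbt)).ne)
      exact ENNReal.toReal_mono hbt hab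

lemma negLog_ofReal_exp (t : ℝ) : negLog (ENNReal.ofReal (Real.exp t)) = ENNReal.ofReal (-t) := by
  rw [negLog, if_neg (by simp [Real.exp_pos t, ENNReal.ofReal_eq_zero, not_le]),
    ENNReal.toReal_ofReal (Real.exp_pos t).le, Real.log_exp]

lemma negLog_mul {a b : ℝ≥0∞} (ha0 : a ≠ 0) (ha1 : a ≤ 1) (hb1 : b ≤ 1) :
    negLog (a * b) = negLog a + negLog b := by
  rcases eq_or_ne b 0 with rfl | hb0
  · simp [negLog, ha0, (lt_of_le_of_lt ha1 (by norm_num : (1:ℝ≥0∞) < ⊤)).ne]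
  · have hat : a ≠ ⊤ := (lt_of_le_of_lt ha1 (by norm_num : (1:ℝ≥0∞) < ⊤)).ne
    have hbt : b ≠ ⊤ := (lt_of_le_of_lt hb1 (by norm_num : (1:ℝ≥0∞) < ⊤)).ne
    have hab : a * b ≠ 0 := mul_ne_zero ha0 hb0
    rw [negLog, negLog, negLog, if_neg hab, if_neg ha0, if_neg hb0,
      ENNReal.toReal_mul, Real.log_mul (ENNReal.toReal_ne_zero.2 ⟨ha0, hat⟩)
        (ENNReal.toReal_ne_zero.2 ⟨hb0, hbt⟩), neg_add,
      ENNReal.ofReal_add]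
    · exact neg_nonneg.2 (Real.log_nonpos ENNReal.toReal_nonneg
        (by rw [← ENNReal.toReal_one]; exact ENNReal.toReal_mono (by norm_num) ha1))
    · exact neg_nonneg.2 (Real.log_nonpos ENNReal.toReal_nonneg
        (by rw [← ENNReal.toReal_one]; exact ENNReal.toReal_mono (by norm_num) hb1))

lemma negLog_rpow {a : ℝ≥0∞} {p : ℝ} (hp : 0 < p) :
    negLog (a ^ p) = ENNReal.ofReal p * negLog a := by
  rcases eq_or_ne a 0 with rfl | ha0
  · rw [ENNReal.zero_rpow_of_pos hp]
    rw [show negLog 0 = ⊤ from if_pos rfl,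
      ENNReal.mul_top (by simp [hp] : ENNReal.ofReal p ≠ 0)]
  · rcases eq_or_ne a ⊤ with rfl | hat
    · rw [ENNReal.top_rpow_of_pos hp]
      simp [negLog]
    · have : a ^ p ≠ 0 := by simp [ENNReal.rpow_eq_zero_iff, ha0, hat, hp, hp.asymm]
      rw [negLog, negLog, if_neg this, if_neg ha0, ← ENNReal.toReal_rpow,
        Real.log_rpow (ENNReal.toReal_pos ha0 hat), ← ENNReal.ofReal_mul hp.le, mul_neg]

end NegLogAux

section EssInfAux

variable {T : Type*} [MeasurableSpace T] {Q : Measure T} [IsProbabilityMeasure Q]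
  {f : T → ℝ}

lemma setA_bddAbove (hf0 : ∀ y, 0 ≤ f y) : BddAbove {a : ℝ | Q {y | f y < a} = 0} := by
  by_contra hbd
  have h : ∀ n : ℕ, Q {y | f y < n} = 0 := by
    intro n
    obtain ⟨a, ha, hna⟩ := not_bddAbove_iff.1 hbd n
    exact measure_mono_null (fun y hy => lt_of_lt_of_le hy hna.le) ha
  have : Q (⋃ n : ℕ, {y | f y < n}) = 0 := measure_iUnion_null h
  have huniv : (⋃ n : ℕ, {y | f y < (n:ℝ)}) = Set.univ := by
    ext y
    simp only [Set.mem_iUnion, Set.mem_setOf_eq, Set.mem_univ, iff_true]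
    obtain ⟨n, hn⟩ := exists_nat_gt (f y)
    exact ⟨n, hn⟩
  rw [huniv, measure_univ] at this
  simp at this

lemma essInf_eq_sSup_setA : essInf f Q = sSup {a : ℝ | Q {y | f y < a} = 0} :=
  essInf_eq_sSup Q f

lemma essInf_nonneg' (hf0 : ∀ y, 0 ≤ f y) : 0 ≤ essInf f Q := by
  rw [essInf_eq_sSup_setA]
  apply le_csSup (setA_bddAbove hf0)
  have : {y | f y < (0:ℝ)} = ∅ := by
    ext y; simp [not_lt.2 (hf0 y)]
  simp [this]

lemma meas_lt_essInf_add_pos (hf0 : ∀ y, 0 ≤ f y) {ε : ℝ} (hε : 0 < ε) :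
    Q {y | f y < essInf f Q + ε} ≠ 0 := by
  intro h
  have : essInf f Q + ε ≤ essInf f Q := by
    conv_rhs => rw [essInf_eq_sSup_setA]
    exact le_csSup (setA_bddAbove hf0) h
  linarith

lemma ae_essInf_le' (hf0 : ∀ y, 0 ≤ f y) : ∀ᵐ y ∂Q, essInf f Q ≤ f y :=
  ae_essInf_le ⟨0, Filter.eventually_map.2 (Filter.Eventually.of_forall hf0)⟩

lemma le_essInf_iff_rat (hf0 : ∀ y, 0 ≤ f y) (c : ℝ) :
    c ≤ essInf f Q ↔ ∀ q : ℚ, (q:ℝ) < c → Q {y | f y < (q:ℝ)} = 0 := by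
  rw [essInf_eq_sSup_setA]
  constructor
  · intro h q hq
    have h0 : (0:ℝ) ∈ {a : ℝ | Q {y | f y < a} = 0} := by
      have : {y | f y < (0:ℝ)} = ∅ := by ext y; simp [not_lt.2 (hf0 y)]
      simp [Set.mem_setOf_eq, this]
    obtain ⟨a, ha, hqa⟩ := exists_lt_of_lt_csSup ⟨0, h0⟩ (lt_of_lt_of_le hq h)
    exact measure_mono_null (fun y hy => lt_trans hy hqa) ha
  · intro h
    by_contra hc
    push_neg at hc
    obtain ⟨q, hq1, hq2⟩ := exists_rat_btwn hc
    have hq0 : Q {y | f y < (q:ℝ)} = 0 := h q hq2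
    have : (q:ℝ) ≤ sSup {a : ℝ | Q {y | f y < a} = 0} := le_csSup (setA_bddAbove hf0) hq0
    linarith

end EssInfAux

section ERealAux

lemma ereal_coe_add_ennreal (a : ℝ) {X : ℝ≥0∞} (hX : X ≠ ⊤) :
    (a : EReal) + (X : EReal) = ((a + X.toReal : ℝ) : EReal) := by
  conv_lhs => rw [← ENNReal.ofReal_toReal hX]
  rw [EReal.coe_ennreal_ofReal, max_eq_left ENNReal.toReal_nonneg, ← EReal.coe_add]

lemma ennreal_coe_eq_toReal {X : ℝ≥0∞} (hX : X ≠ ⊤) :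
    (X : EReal) = ((X.toReal : ℝ) : EReal) := by
  conv_lhs => rw [← ENNReal.ofReal_toReal hX]
  rw [EReal.coe_ennreal_ofReal, max_eq_left ENNReal.toReal_nonneg]

lemma ereal_neg_add_cancel {b : ℝ} (hb : 0 ≤ b) (X : ℝ≥0∞) :
    ((-b : ℝ) : EReal) + ((ENNReal.ofReal b + X : ℝ≥0∞) : EReal) = (X : EReal) := by
  rcases eq_or_ne X ⊤ with rfl | hX
  · rw [add_top, EReal.coe_ennreal_top, EReal.coe_add_top]
  · rw [ereal_coe_add_ennreal _ (by simp [hX]),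
      ENNReal.toReal_add (by simp) hX, ENNReal.toReal_ofReal hb,
      ennreal_coe_eq_toReal hX, EReal.coe_eq_coe_iff]
    ring

lemma ennreal_iSup_coe_le {f : ℕ → ℝ≥0∞} {X : EReal} (h : ∀ n, (f n : EReal) ≤ X) :
    ((⨆ n, f n : ℝ≥0∞) : EReal) ≤ X := by
  rcases eq_or_ne X ⊤ with rfl | hX
  · exact le_top
  have hfn : ∀ n, f n ≠ ⊤ := by
    intro n hn
    exact hX (top_le_iff.1 (by simpa [hn, EReal.coe_ennreal_top] using h n))
  have hX0 : (0 : EReal) ≤ X := le_trans (EReal.coe_ennreal_nonneg (f 0)) (h 0)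
  have hXbot : X ≠ ⊥ := fun hb => by simp [hb] at hX0
  set x := X.toReal with hx
  have hXx : X = (x : EReal) := (EReal.coe_toReal hX hXbot).symm
  have hfx : ∀ n, f n ≤ ENNReal.ofReal x := by
    intro n
    rw [ENNReal.le_ofReal_iff_toReal_le (hfn n) (by
      have := le_trans (EReal.coe_ennreal_nonneg (f 0)) (h 0)
      rw [hXx] at this; exact_mod_cast this)]
    have := h n
    rw [hXx, ← ENNReal.ofReal_toReal (hfn n), EReal.coe_ennreal_ofReal,
      max_eq_left ENNReal.toReal_nonneg, EReal.coe_le_coe_iff] at this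
    exact this
  calc ((⨆ n, f n : ℝ≥0∞) : EReal) ≤ ((ENNReal.ofReal x : ℝ≥0∞) : EReal) :=
        EReal.coe_ennreal_le_coe_ennreal_iff.2 (iSup_le hfx)
    _ = ((max x 0 : ℝ) : EReal) := EReal.coe_ennreal_ofReal
    _ ≤ X := by
        rw [hXx, EReal.coe_le_coe_iff, max_le_iff]
        constructor
        · exact le_refl x
        · rw [hXx] at hX0; exact_mod_cast hX0

lemma real_le_of_forall_pos_le_add {a b : ℝ} (h : ∀ ε : ℝ, 0 < ε → a ≤ b + ε) : a ≤ b := by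
  by_contra hc
  push_neg at hc
  have := h ((a - b) / 2) (by linarith)
  linarith

end ERealAux

section JensenAux

/-- Jensen's inequality for `rpow` over a probability measure. -/
lemma lintegral_rpow_ge {α : Type*} [MeasurableSpace α] {μ : Measure α}
    [IsProbabilityMeasure μ] {u : α → ℝ≥0∞} (hu : AEMeasurable u μ) {p : ℝ} (hp : 1 ≤ p) :
    (∫⁻ a, u a ∂μ) ^ p ≤ ∫⁻ a, (u a) ^ p ∂μ := by
  rcases eq_or_lt_of_le hp with rfl | hp1
  · simp
  have hpq : p.HolderConjugate (Real.conjExponent p) := Real.HolderConjugate.conjExponent hp1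
  have hp0 : (0:ℝ) < p := lt_trans zero_lt_one hp1
  have key : ∫⁻ a, u a ∂μ ≤ (∫⁻ a, u a ^ p ∂μ) ^ (1 / p) := by
    have h2 := ENNReal.lintegral_mul_le_Lp_mul_Lq μ hpq hu aemeasurable_const
      (g := fun _ => (1 : ℝ≥0∞))
    simpa using h2
  calc (∫⁻ a, u a ∂μ) ^ p ≤ ((∫⁻ a, u a ^ p ∂μ) ^ (1 / p)) ^ p :=
        ENNReal.rpow_le_rpow key hp0.le
    _ = ∫⁻ a, u a ^ p ∂μ := by
        rw [← ENNReal.rpow_mul, one_div, inv_mul_cancel₀ hp0.ne', ENNReal.rpow_one]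

end JensenAux

section Stmt6Aux

variable {S T : Type*} [MeasurableSpace S] [MeasurableSpace T]
  (ρ : S × T → ℝ) (P : Measure S) (Q : Measure T)

/-- `J(c,x) = E_Y e^{-c (ρ(x,Y) - ρ_Q(x))}`. -/
def Jfun (c : ℝ) (x : S) : ℝ≥0∞ :=
  ∫⁻ y, ENNReal.ofReal (Real.exp (-(c * (ρ (x, y) - rhoQ ρ Q x)))) ∂Q

/-- `G(c) = E_X[-log J(c,X)]`. -/
def Gfun (c : ℝ) : ℝ≥0∞ := ∫⁻ x, negLog (Jfun ρ Q c x) ∂P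

/-- `m = E_X[ρ_Q(X)]`. -/
def mInt : ℝ≥0∞ := ∫⁻ x, ENNReal.ofReal (rhoQ ρ Q x) ∂P

/-- `K = E_X[-log Q{y : ρ(X,y) = ρ_Q(X)}]`. -/
def Kint : ℝ≥0∞ := ∫⁻ x, negLog (Q {y | ρ (x, y) = rhoQ ρ Q x}) ∂P

variable {ρ P Q}
variable [IsProbabilityMeasure P] [IsProbabilityMeasure Q]
  (hρm : Measurable ρ) (hρ0 : ∀ z, 0 ≤ ρ z)

section RhoQBasic
include hρ0

lemma rhoQ_nonneg (x : S) : 0 ≤ rhoQ ρ Q x :=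
  essInf_nonneg' (fun y => hρ0 (x, y))

lemma ae_rhoQ_le (x : S) : ∀ᵐ y ∂Q, rhoQ ρ Q x ≤ ρ (x, y) :=
  ae_essInf_le' (fun y => hρ0 (x, y))

lemma meas_rhoQ_eps (x : S) {ε : ℝ} (hε : 0 < ε) :
    Q {y | ρ (x, y) < rhoQ ρ Q x + ε} ≠ 0 :=
  meas_lt_essInf_add_pos (fun y => hρ0 (x, y)) hε

include hρm

lemma measurable_rhoQ : Measurable (rhoQ ρ Q) := by
  apply measurable_of_Ici
  intro c
  have hchar : rhoQ ρ Q ⁻¹' Ici c =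
      ⋂ (q : ℚ) (_ : (q : ℝ) < c), {x | Q {y | ρ (x, y) < (q : ℝ)} = 0} := by
    ext x
    simp only [Set.mem_preimage, Set.mem_Ici, Set.mem_iInter, Set.mem_setOf_eq]
    exact le_essInf_iff_rat (fun y => hρ0 (x, y)) c
  rw [hchar]
  refine MeasurableSet.iInter fun q => MeasurableSet.iInter fun _ => ?_
  have hs : MeasurableSet {z : S × T | ρ z < (q : ℝ)} := measurableSet_lt hρm measurable_const
  have hmeas : Measurable fun x => Q (Prod.mk x ⁻¹' {z : S × T | ρ z < (q : ℝ)}) :=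
    measurable_measure_prodMk_left hs
  exact hmeas (measurableSet_singleton 0)

end RhoQBasic

section JfunBasic
include hρm hρ0

lemma measurable_Jfun_integrand (c : ℝ) :
    Measurable fun z : S × T =>
      ENNReal.ofReal (Real.exp (-(c * (ρ z - rhoQ ρ Q z.1)))) := by
  have h1 : Measurable fun z : S × T => ρ z - rhoQ ρ Q z.1 :=
    hρm.sub ((measurable_rhoQ hρm hρ0).comp measurable_fst)
  exact ((h1.const_mul c).neg.exp).ennreal_ofReal

lemma measurable_Jfun (c : ℝ) : Measurable (Jfun ρ Q c) :=
  Measurable.lintegral_prod_right' (measurable_Jfun_integrand hρm hρ0 c)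

lemma Jfun_le_one {c : ℝ} (hc : 0 ≤ c) (x : S) : Jfun ρ Q c x ≤ 1 := by
  have h : ∀ᵐ y ∂Q, ENNReal.ofReal (Real.exp (-(c * (ρ (x, y) - rhoQ ρ Q x)))) ≤ 1 := by
    filter_upwards [ae_rhoQ_le hρ0 x] with y hy
    apply ENNReal.ofReal_le_one.2
    rw [Real.exp_le_one_iff, neg_nonpos]
    exact mul_nonneg hc (by linarith)
  calc Jfun ρ Q c x ≤ ∫⁻ _, 1 ∂Q := lintegral_mono_ae h
    _ = 1 := by simp

lemma Jfun_antitone {c c' : ℝ} (hc : 0 ≤ c) (hcc : c ≤ c') (x : S) :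
    Jfun ρ Q c' x ≤ Jfun ρ Q c x := by
  apply lintegral_mono_ae
  filter_upwards [ae_rhoQ_le hρ0 x] with y hy
  apply ENNReal.ofReal_le_ofReal
  apply Real.exp_le_exp.2
  apply neg_le_neg
  apply mul_le_mul_of_nonneg_right hcc (by linarith)

lemma Jfun_ge_eps {c ε : ℝ} (hc : 0 ≤ c) (hε : 0 < ε) (x : S) :
    ENNReal.ofReal (Real.exp (-(c * ε))) * Q {y | ρ (x, y) < rhoQ ρ Q x + ε}
      ≤ Jfun ρ Q c x := by
  set s := {y | ρ (x, y) < rhoQ ρ Q x + ε} with hs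
  have hsm : MeasurableSet s :=
    measurableSet_lt (hρm.comp measurable_prodMk_left) measurable_const
  calc ENNReal.ofReal (Real.exp (-(c * ε))) * Q s
      = ∫⁻ _ in s, ENNReal.ofReal (Real.exp (-(c * ε))) ∂Q := (setLIntegral_const s _).symm
    _ ≤ ∫⁻ y in s, ENNReal.ofReal (Real.exp (-(c * (ρ (x, y) - rhoQ ρ Q x)))) ∂Q := by
        apply setLIntegral_mono ((measurable_Jfun_integrand hρm hρ0 c).comp
          (measurable_prodMk_left))
        intro y hy
        simp only [Function.comp_apply]
        apply ENNReal.ofReal_le_ofReal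
        apply Real.exp_le_exp.2
        apply neg_le_neg
        apply mul_le_mul_of_nonneg_left _ hc
        have : ρ (x, y) < rhoQ ρ Q x + ε := hy
        linarith
    _ ≤ Jfun ρ Q c x := setLIntegral_le_lintegral s _

lemma Jfun_ne_zero {c : ℝ} (hc : 0 ≤ c) (x : S) : Jfun ρ Q c x ≠ 0 := by
  intro h
  have h1 := Jfun_ge_eps (Q := Q) hρm hρ0 hc one_pos x
  rw [h, le_zero_iff, mul_eq_zero] at h1
  rcases h1 with h1 | h1
  · rw [ENNReal.ofReal_eq_zero] at h1
    exact absurd h1 (not_le.2 (Real.exp_pos _))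
  · exact meas_rhoQ_eps hρ0 x one_pos h1

lemma Jfun_ge_qstar (c : ℝ) (x : S) :
    Q {y | ρ (x, y) = rhoQ ρ Q x} ≤ Jfun ρ Q c x := by
  set s := {y | ρ (x, y) = rhoQ ρ Q x} with hs
  have hsm : MeasurableSet s :=
    measurableSet_eq_fun (hρm.comp measurable_prodMk_left) measurable_const
  calc Q s = ∫⁻ _ in s, 1 ∂Q := (setLIntegral_one s).symm
    _ ≤ ∫⁻ y in s, ENNReal.ofReal (Real.exp (-(c * (ρ (x, y) - rhoQ ρ Q x)))) ∂Q := by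
        apply setLIntegral_mono ((measurable_Jfun_integrand hρm hρ0 c).comp
          (measurable_prodMk_left))
        intro y hy
        have hyy : ρ (x, y) = rhoQ ρ Q x := hy
        simp only [Function.comp_apply]
        rw [hyy, sub_self, mul_zero, neg_zero, Real.exp_zero]
        simp
    _ ≤ Jfun ρ Q c x := setLIntegral_le_lintegral s _

lemma Jfun_zero_eq_one (x : S) : Jfun ρ Q (0:ℝ) x = 1 := by
  unfold Jfun
  simp

end JfunBasic

section Decomp
include hρm hρ0

lemma measurable_negLog_Jfun (c : ℝ) : Measurable fun x => negLog (Jfun ρ Q c x) :=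
  measurable_negLog.comp (measurable_Jfun hρm hρ0 c)

lemma F_decomp {l : ℝ} (hl : l < 0) (x : S) :
    (∫⁻ y, ENNReal.ofReal (Real.exp (l * ρ (x, y))) ∂Q)
      = ENNReal.ofReal (Real.exp (l * rhoQ ρ Q x)) * Jfun ρ Q (-l) x := by
  have hmy : Measurable fun y =>
      ENNReal.ofReal (Real.exp (-(-l * (ρ (x, y) - rhoQ ρ Q x)))) :=
    (measurable_Jfun_integrand hρm hρ0 (-l)).comp measurable_prodMk_left
  rw [Jfun, ← lintegral_const_mul _ hmy]
  apply lintegral_congr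
  intro y
  rw [← ENNReal.ofReal_mul (Real.exp_nonneg _), ← Real.exp_add]
  congr 2
  ring

lemma negLog_F_eq {l : ℝ} (hl : l < 0) (x : S) :
    negLog (∫⁻ y, ENNReal.ofReal (Real.exp (l * ρ (x, y))) ∂Q)
      = ENNReal.ofReal (-l * rhoQ ρ Q x) + negLog (Jfun ρ Q (-l) x) := by
  have hr0 := rhoQ_nonneg (Q := Q) hρ0 x
  rw [F_decomp hρm hρ0 hl x, negLog_mul, negLog_ofReal_exp]
  · congr 2
    ring
  · simp [Real.exp_pos, ENNReal.ofReal_eq_zero, not_le]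
  · apply ENNReal.ofReal_le_one.2
    rw [Real.exp_le_one_iff]
    nlinarith
  · exact Jfun_le_one hρm hρ0 (neg_nonneg.2 hl.le) x

lemma g_eq {l : ℝ} (hl : l < 0) :
    (∫⁻ x, negLog (∫⁻ y, ENNReal.ofReal (Real.exp (l * ρ (x, y))) ∂Q) ∂P)
      = ENNReal.ofReal (-l) * mInt ρ P Q + Gfun ρ P Q (-l) := by
  rw [lintegral_congr (negLog_F_eq hρm hρ0 hl),
    lintegral_add_left (((measurable_rhoQ hρm hρ0).const_mul (-l)).ennreal_ofReal)]
  congr 1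
  have : ∀ x : S, ENNReal.ofReal (-l * rhoQ ρ Q x)
      = ENNReal.ofReal (-l) * ENNReal.ofReal (rhoQ ρ Q x) := fun x =>
    ENNReal.ofReal_mul (neg_nonneg.2 hl.le)
  rw [lintegral_congr this, lintegral_const_mul _ (measurable_rhoQ hρm hρ0).ennreal_ofReal]
  rfl

lemma Lam_neg {l : ℝ} (hl : l < 0) :
    Lam ρ P Q l = -(((ENNReal.ofReal (-l) * mInt ρ P Q + Gfun ρ P Q (-l) : ℝ≥0∞)) : EReal) := by
  rw [Lam, if_neg (not_le.2 hl), g_eq hρm hρ0 hl]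

lemma term_eq {l : ℝ} (hl : l < 0) (D : ℝ) :
    ((l * D : ℝ) : EReal) - Lam ρ P Q l
      = ((l * D : ℝ) : EReal)
        + ((ENNReal.ofReal (-l) * mInt ρ P Q + Gfun ρ P Q (-l) : ℝ≥0∞) : EReal) := by
  rw [Lam_neg hρm hρ0 hl, sub_eq_add_neg, neg_neg]

end Decomp

lemma Lam_zero' : Lam ρ P Q 0 = 0 := by
  rw [Lam, if_pos le_rfl]
  have h2 : ∀ x : S, posLog (∫⁻ y, ENNReal.ofReal (Real.exp (0 * ρ (x, y))) ∂Q) = 0 := by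
    intro x
    have : (∫⁻ y, ENNReal.ofReal (Real.exp (0 * ρ (x, y))) ∂Q) = 1 := by simp
    rw [this]
    simp [posLog]
  rw [lintegral_congr h2, lintegral_zero]
  rfl

lemma term_le_LamStar (D : ℝ) {l : ℝ} (hl : l ≤ 0) :
    (((l * D : ℝ) : EReal) - Lam ρ P Q l) ≤ LamStar ρ P Q D :=
  le_iSup₂ (f := fun l (_ : l ∈ Iic (0:ℝ)) => (((l * D : ℝ) : EReal) - Lam ρ P Q l)) l hl

lemma LamStar_le {D : ℝ} {B : EReal}
    (h : ∀ l : ℝ, l ≤ 0 → (((l * D : ℝ) : EReal) - Lam ρ P Q l) ≤ B) :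
    LamStar ρ P Q D ≤ B :=
  iSup₂_le fun l hl => h l hl

lemma LamStar_nonneg (D : ℝ) : 0 ≤ LamStar ρ P Q D := by
  have := term_le_LamStar (P := P) (Q := Q) (ρ := ρ) D (le_refl (0:ℝ))
  rw [Lam_zero'] at this
  simpa using this

section GfunLemmas
include hρm hρ0

lemma Gfun_mono {c c' : ℝ} (hc : 0 ≤ c) (hcc : c ≤ c') :
    Gfun ρ P Q c ≤ Gfun ρ P Q c' :=
  lintegral_mono fun x => negLog_antitone (Jfun_antitone hρm hρ0 hc hcc x)

lemma Gfun_le_Kint (c : ℝ) : Gfun ρ P Q c ≤ Kint ρ P Q :=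
  lintegral_mono fun x => negLog_antitone (Jfun_ge_qstar hρm hρ0 c x)

lemma Gfun_zero' : Gfun ρ P Q 0 = 0 := by
  unfold Gfun
  have : ∀ x : S, negLog (Jfun ρ Q (0:ℝ) x) = 0 := by
    intro x
    rw [Jfun_zero_eq_one hρm hρ0, negLog_one']
  rw [lintegral_congr this, lintegral_zero]

lemma tendsto_Jfun (x : S) :
    Tendsto (fun n : ℕ => Jfun ρ Q (n:ℝ) x) atTop
      (𝓝 (Q {y | ρ (x, y) = rhoQ ρ Q x})) := by
  have hsm : MeasurableSet {y | ρ (x, y) = rhoQ ρ Q x} :=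
    measurableSet_eq_fun (hρm.comp measurable_prodMk_left) measurable_const
  rw [← lintegral_indicator_one hsm]
  apply tendsto_lintegral_of_dominated_convergence (bound := fun _ => 1)
  · intro n
    exact (measurable_Jfun_integrand hρm hρ0 (n:ℝ)).comp measurable_prodMk_left
  · intro n
    filter_upwards [ae_rhoQ_le hρ0 x] with y hy
    apply ENNReal.ofReal_le_one.2
    rw [Real.exp_le_one_iff, neg_nonpos]
    exact mul_nonneg (Nat.cast_nonneg n) (by linarith)
  · simp
  · filter_upwards [ae_rhoQ_le hρ0 x] with y hy
    by_cases heq : ρ (x, y) = rhoQ ρ Q x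
    · have hfn : (fun n : ℕ =>
          ENNReal.ofReal (Real.exp (-((n:ℝ) * (ρ (x, y) - rhoQ ρ Q x))))) =
          fun _ => (1 : ℝ≥0∞) := by
        funext n
        rw [heq, sub_self, mul_zero, neg_zero, Real.exp_zero, ENNReal.ofReal_one]
      rw [hfn, Set.indicator_of_mem (by exact heq)]
      exact tendsto_const_nhds
    · rw [Set.indicator_of_notMem (by exact heq)]
      have ht : 0 < ρ (x, y) - rhoQ ρ Q x :=
        sub_pos.2 (lt_of_le_of_ne hy (fun h => heq h.symm))
      have h1 : Tendsto (fun n : ℕ => -((n:ℝ) * (ρ (x, y) - rhoQ ρ Q x))) atTop atBot := by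
        apply Filter.tendsto_neg_atTop_atBot.comp
        exact Filter.Tendsto.atTop_mul_const ht tendsto_natCast_atTop_atTop
      have h2 : Tendsto (fun n : ℕ =>
          Real.exp (-((n:ℝ) * (ρ (x, y) - rhoQ ρ Q x)))) atTop (𝓝 0) :=
        Real.tendsto_exp_atBot.comp h1
      have h3 := (ENNReal.continuous_ofReal.tendsto 0).comp h2
      rw [ENNReal.ofReal_zero] at h3
      exact h3

lemma tendsto_negLog_Jfun (x : S) :
    Tendsto (fun n : ℕ => negLog (Jfun ρ Q (n:ℝ) x)) atTop
      (𝓝 (negLog (Q {y | ρ (x, y) = rhoQ ρ Q x}))) := by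
  set q := Q {y | ρ (x, y) = rhoQ ρ Q x} with hqdef
  rcases eq_or_ne q 0 with hq0 | hq0
  · rw [hq0, show negLog 0 = ⊤ from if_pos rfl]
    rw [ENNReal.tendsto_nhds_top_iff_nat]
    intro m
    have hev : ∀ᶠ n : ℕ in atTop,
        Jfun ρ Q (n:ℝ) x < ENNReal.ofReal (Real.exp (-((m:ℝ)+1))) := by
      apply Filter.Tendsto.eventually_lt_const _ (tendsto_Jfun hρm hρ0 x)
      rw [← hqdef, hq0]
      exact ENNReal.ofReal_pos.2 (Real.exp_pos _)
    filter_upwards [hev] with n hn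
    have hm1 : ENNReal.ofReal ((m:ℝ)+1) = (m : ℝ≥0∞) + 1 := by
      rw [ENNReal.ofReal_add (by positivity) zero_le_one, ENNReal.ofReal_one,
        ENNReal.ofReal_natCast]
    calc (m : ℝ≥0∞) < (m : ℝ≥0∞) + 1 :=
          ENNReal.lt_add_right (ENNReal.natCast_ne_top m) one_ne_zero
      _ = negLog (ENNReal.ofReal (Real.exp (-((m:ℝ)+1)))) := by
          rw [negLog_ofReal_exp, neg_neg, hm1]
      _ ≤ negLog (Jfun ρ Q (n:ℝ) x) := negLog_antitone hn.le
  · have hqt : q ≠ ⊤ := ne_top_of_le_ne_top ENNReal.one_ne_top prob_le_one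
    have hqr : q.toReal ≠ 0 := ENNReal.toReal_ne_zero.2 ⟨hq0, hqt⟩
    have t1 : Tendsto ENNReal.toReal (𝓝 q) (𝓝 q.toReal) := ENNReal.tendsto_toReal hqt
    have t2 : Tendsto (fun r : ℝ => ENNReal.ofReal (-Real.log r)) (𝓝 q.toReal)
        (𝓝 (ENNReal.ofReal (-Real.log q.toReal))) :=
      (ENNReal.continuous_ofReal.tendsto _).comp ((Real.continuousAt_log hqr).neg)
    have hfn : (fun n : ℕ => negLog (Jfun ρ Q (n:ℝ) x)) =
        fun n : ℕ => ENNReal.ofReal (-Real.log (Jfun ρ Q (n:ℝ) x).toReal) := by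
      funext n
      exact if_neg (Jfun_ne_zero hρm hρ0 (Nat.cast_nonneg n) x)
    rw [hfn, show negLog q = ENNReal.ofReal (-Real.log q.toReal) from if_neg hq0]
    exact (t2.comp t1).comp (tendsto_Jfun hρm hρ0 x)

lemma monotone_negLog_Jfun (x : S) :
    Monotone fun n : ℕ => negLog (Jfun ρ Q (n:ℝ) x) := fun n m hnm =>
  negLog_antitone (Jfun_antitone hρm hρ0 (Nat.cast_nonneg n) (Nat.cast_le.2 hnm) x)

lemma iSup_negLog_Jfun (x : S) :
    ⨆ n : ℕ, negLog (Jfun ρ Q (n:ℝ) x) = negLog (Q {y | ρ (x, y) = rhoQ ρ Q x}) :=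
  tendsto_nhds_unique (tendsto_atTop_iSup (monotone_negLog_Jfun hρm hρ0 x))
    (tendsto_negLog_Jfun hρm hρ0 x)

lemma iSup_Gfun_eq_Kint : ⨆ n : ℕ, Gfun ρ P Q (n:ℝ) = Kint ρ P Q := by
  calc ⨆ n : ℕ, Gfun ρ P Q (n:ℝ)
      = ∫⁻ x, ⨆ n : ℕ, negLog (Jfun ρ Q (n:ℝ) x) ∂P :=
        (lintegral_iSup (fun n => measurable_negLog_Jfun hρm hρ0 (n:ℝ))
          (fun n m hnm x => monotone_negLog_Jfun hρm hρ0 x hnm)).symm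
    _ = Kint ρ P Q := lintegral_congr fun x => iSup_negLog_Jfun hρm hρ0 x

lemma Jfun_rpow_le {c₀ c : ℝ} (h0 : 0 < c₀) (hcc : c₀ ≤ c) (x : S) :
    (Jfun ρ Q c₀ x) ^ (c / c₀) ≤ Jfun ρ Q c x := by
  have hp : 1 ≤ c / c₀ := (one_le_div h0).2 hcc
  have hJ := lintegral_rpow_ge (μ := Q)
    (u := fun y => ENNReal.ofReal (Real.exp (-(c₀ * (ρ (x, y) - rhoQ ρ Q x)))))
    ((measurable_Jfun_integrand hρm hρ0 c₀).comp measurable_prodMk_left).aemeasurable hp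
  refine le_trans hJ (le_of_eq (lintegral_congr fun y => ?_))
  show ENNReal.ofReal (Real.exp (-(c₀ * (ρ (x, y) - rhoQ ρ Q x)))) ^ (c / c₀) = _
  rw [ENNReal.ofReal_rpow_of_pos (Real.exp_pos _), ← Real.exp_mul]
  congr 2
  field_simp

lemma negLog_Jfun_ratio {c₀ c : ℝ} (h0 : 0 < c₀) (hcc : c₀ ≤ c) (x : S) :
    negLog (Jfun ρ Q c x) ≤ ENNReal.ofReal (c / c₀) * negLog (Jfun ρ Q c₀ x) := by
  rw [← negLog_rpow (div_pos (lt_of_lt_of_le h0 hcc) h0)]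
  exact negLog_antitone (Jfun_rpow_le hρm hρ0 h0 hcc x)

lemma Gfun_ratio {c₀ c : ℝ} (h0 : 0 < c₀) (hcc : c₀ ≤ c) :
    Gfun ρ P Q c ≤ ENNReal.ofReal (c / c₀) * Gfun ρ P Q c₀ := by
  rw [Gfun, Gfun, ← lintegral_const_mul _ (measurable_negLog_Jfun hρm hρ0 c₀)]
  exact lintegral_mono fun x => negLog_Jfun_ratio hρm hρ0 h0 hcc x

lemma negLog_Jfun_linear {δ : ℝ} (hδ : 0 < δ) {c : ℝ} (hc : 0 ≤ c) (x : S) :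
    negLog (Jfun ρ Q c x) ≤
      ENNReal.ofReal (c * δ) + negLog (Q {y | ρ (x, y) < rhoQ ρ Q x + δ}) := by
  refine le_trans (negLog_antitone (Jfun_ge_eps hρm hρ0 hc hδ x)) (le_of_eq ?_)
  rw [negLog_mul _ _ prob_le_one, negLog_ofReal_exp, neg_neg]
  · simp [Real.exp_pos, ENNReal.ofReal_eq_zero, not_le]
  · apply ENNReal.ofReal_le_one.2
    rw [Real.exp_le_one_iff, neg_nonpos]
    positivity

lemma tendsto_inv_Gfun (hG1 : Gfun ρ P Q 1 ≠ ⊤) :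
    Tendsto (fun n : ℕ => (n : ℝ≥0∞)⁻¹ * Gfun ρ P Q (n:ℝ)) atTop (𝓝 0) := by
  have heq : (fun n : ℕ => (n : ℝ≥0∞)⁻¹ * Gfun ρ P Q (n:ℝ))
      = fun n : ℕ => ∫⁻ x, (n : ℝ≥0∞)⁻¹ * negLog (Jfun ρ Q (n:ℝ) x) ∂P := by
    funext n
    rw [Gfun, lintegral_const_mul _ (measurable_negLog_Jfun hρm hρ0 (n:ℝ))]
  rw [heq]
  have hmain := tendsto_lintegral_of_dominated_convergence (μ := P)
    (F := fun (n : ℕ) x => (n : ℝ≥0∞)⁻¹ * negLog (Jfun ρ Q (n:ℝ) x))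
    (f := fun _ => 0) (bound := fun x => negLog (Jfun ρ Q (1:ℝ) x))
    (fun n => (measurable_negLog_Jfun hρm hρ0 (n:ℝ)).const_mul _)
    ?_ ?_ ?_
  · simpa [lintegral_zero] using hmain
  · -- domination
    intro n
    apply Filter.Eventually.of_forall
    intro x
    rcases Nat.eq_zero_or_pos n with rfl | hn
    · simp [Jfun_zero_eq_one hρm hρ0, negLog_one']
    · have hn1 : (1:ℝ) ≤ (n:ℝ) := by exact_mod_cast hn
      have h1 := negLog_Jfun_ratio (Q := Q) hρm hρ0 one_pos hn1 x
      rw [div_one, ENNReal.ofReal_natCast] at h1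
      calc (n : ℝ≥0∞)⁻¹ * negLog (Jfun ρ Q (n:ℝ) x)
          ≤ (n : ℝ≥0∞)⁻¹ * ((n:ℝ≥0∞) * negLog (Jfun ρ Q (1:ℝ) x)) :=
            mul_le_mul_right h1 _
        _ = negLog (Jfun ρ Q (1:ℝ) x) := by
            rw [← mul_assoc, ENNReal.inv_mul_cancel (by exact_mod_cast hn.ne')
              (ENNReal.natCast_ne_top n), one_mul]
  · exact hG1
  · -- pointwise convergence to 0
    apply Filter.Eventually.of_forall
    intro x
    rw [ENNReal.tendsto_nhds_zero]
    intro ε hε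
    rcases eq_or_ne ε ⊤ with rfl | hεt
    · exact Filter.Eventually.of_forall fun n => le_top
    have hd : 0 < ε.toReal := ENNReal.toReal_pos hε.ne' hεt
    set δ := ε.toReal / 2 with hδdef
    have hδ : 0 < δ := by positivity
    have hq : Q {y | ρ (x, y) < rhoQ ρ Q x + δ} ≠ 0 := meas_rhoQ_eps hρ0 x hδ
    have hnl : negLog (Q {y | ρ (x, y) < rhoQ ρ Q x + δ}) ≠ ⊤ := by
      rw [negLog, if_neg hq]
      exact ENNReal.ofReal_ne_top
    have h2 : Tendsto (fun n : ℕ =>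
        (n:ℝ≥0∞)⁻¹ * negLog (Q {y | ρ (x, y) < rhoQ ρ Q x + δ})) atTop (𝓝 0) := by
      have := ENNReal.Tendsto.mul_const ENNReal.tendsto_inv_nat_nhds_zero
        (Or.inr hnl)
      simpa using this
    have h3 := (ENNReal.tendsto_nhds_zero.1 h2) (ENNReal.ofReal δ)
      (ENNReal.ofReal_pos.2 hδ)
    filter_upwards [h3] with n hn
    have hb1 : (n:ℝ≥0∞)⁻¹ * ENNReal.ofReal ((n:ℝ) * δ) ≤ ENNReal.ofReal δ := by
      rcases Nat.eq_zero_or_pos n with rfl | hnp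
      · simp
      · rw [ENNReal.ofReal_mul (Nat.cast_nonneg n), ENNReal.ofReal_natCast, ← mul_assoc,
          ENNReal.inv_mul_cancel (by exact_mod_cast hnp.ne') (ENNReal.natCast_ne_top n),
          one_mul]
    calc (n:ℝ≥0∞)⁻¹ * negLog (Jfun ρ Q (n:ℝ) x)
        ≤ (n:ℝ≥0∞)⁻¹ * (ENNReal.ofReal ((n:ℝ) * δ)
            + negLog (Q {y | ρ (x, y) < rhoQ ρ Q x + δ})) :=
          mul_le_mul_right (negLog_Jfun_linear hρm hρ0 hδ (Nat.cast_nonneg n) x) _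
      _ = (n:ℝ≥0∞)⁻¹ * ENNReal.ofReal ((n:ℝ) * δ)
            + (n:ℝ≥0∞)⁻¹ * negLog (Q {y | ρ (x, y) < rhoQ ρ Q x + δ}) := mul_add _ _ _
      _ ≤ ENNReal.ofReal δ + ENNReal.ofReal δ := add_le_add hb1 hn
      _ = ε := by
          rw [← ENNReal.ofReal_add hδ.le hδ.le, hδdef, add_halves,
            ENNReal.ofReal_toReal hεt]

end GfunLemmas

lemma ofReal_mul_mInt (hm : mInt ρ P Q ≠ ⊤) {c : ℝ} (hc : 0 ≤ c) :
    ENNReal.ofReal c * mInt ρ P Q = ENNReal.ofReal (c * (mInt ρ P Q).toReal) := by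
  rw [ENNReal.ofReal_mul hc, ENNReal.ofReal_toReal hm]

section LamStarLemmas
include hρm hρ0

lemma term_ge_add {c : ℝ} (hc : 0 < c) (D : ℝ) :
    ((-c * D : ℝ) : EReal)
      + ((ENNReal.ofReal c * mInt ρ P Q + Gfun ρ P Q c : ℝ≥0∞) : EReal)
      ≤ LamStar ρ P Q D := by
  have h := term_le_LamStar (ρ := ρ) (P := P) (Q := Q) D (l := -c) (neg_nonpos.2 hc.le)
  rw [term_eq hρm hρ0 (neg_lt_zero.2 hc) D] at h
  simpa [neg_neg] using h

lemma LamStar_eq_top_of_mInt_top (hm : mInt ρ P Q = ⊤) (D : ℝ) :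
    LamStar ρ P Q D = ⊤ := by
  apply top_le_iff.1
  refine le_trans ?_ (term_ge_add hρm hρ0 one_pos D)
  rw [hm, ENNReal.mul_top (by simp : ENNReal.ofReal (1:ℝ) ≠ 0), top_add,
    EReal.coe_ennreal_top, EReal.coe_add_top]

lemma Gfun_ne_top {D : ℝ} (hD : LamStar ρ P Q D ≠ ⊤) {c : ℝ} (hc : 0 < c) :
    Gfun ρ P Q c ≠ ⊤ := by
  intro hG
  apply hD
  apply top_le_iff.1
  refine le_trans ?_ (term_ge_add hρm hρ0 hc D)
  rw [hG, add_top, EReal.coe_ennreal_top, EReal.coe_add_top]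

lemma term_ge_linear (hm : mInt ρ P Q ≠ ⊤) {c : ℝ} (hc : 0 < c) (D : ℝ) :
    ((c * ((mInt ρ P Q).toReal - D) : ℝ) : EReal) ≤ LamStar ρ P Q D := by
  refine le_trans ?_ (term_ge_add hρm hρ0 hc D)
  have h1 : ENNReal.ofReal (c * (mInt ρ P Q).toReal)
      ≤ ENNReal.ofReal c * mInt ρ P Q + Gfun ρ P Q c := by
    rw [ofReal_mul_mInt hm hc.le]
    exact le_self_add
  calc ((c * ((mInt ρ P Q).toReal - D) : ℝ) : EReal)
      = ((-c * D : ℝ) : EReal)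
        + ((ENNReal.ofReal (c * (mInt ρ P Q).toReal) : ℝ≥0∞) : EReal) := by
        rw [ereal_coe_add_ennreal _ ENNReal.ofReal_ne_top,
          ENNReal.toReal_ofReal (by positivity), EReal.coe_eq_coe_iff]
        ring
    _ ≤ _ := add_le_add_right (EReal.coe_ennreal_le_coe_ennreal_iff.2 h1) _

lemma LamStar_eq_top_of_lt (hm : mInt ρ P Q ≠ ⊤) {D : ℝ}
    (hD : D < (mInt ρ P Q).toReal) : LamStar ρ P Q D = ⊤ := by
  by_contra hne
  have hbot : LamStar ρ P Q D ≠ ⊥ := by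
    intro hb
    have h0 := LamStar_nonneg (ρ := ρ) (P := P) (Q := Q) D
    rw [hb] at h0
    simp at h0
  set M := (LamStar ρ P Q D).toReal with hM
  have hMeq : LamStar ρ P Q D = (M : EReal) := (EReal.coe_toReal hne hbot).symm
  have hpos : 0 < (mInt ρ P Q).toReal - D := by linarith
  obtain ⟨n, hn⟩ := exists_nat_gt (max 0 (M / ((mInt ρ P Q).toReal - D)))
  have hn0 : (0:ℝ) < n := lt_of_le_of_lt (le_max_left _ _) hn
  have hterm := term_ge_linear hρm hρ0 hm hn0 D
  rw [hMeq, EReal.coe_le_coe_iff] at hterm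
  have hgt : M < (n:ℝ) * ((mInt ρ P Q).toReal - D) :=
    (div_lt_iff₀ hpos).1 (lt_of_le_of_lt (le_max_right _ _) hn)
  linarith

lemma LamStar_ne_top_of_gt (hm : mInt ρ P Q ≠ ⊤) (hG1 : Gfun ρ P Q 1 ≠ ⊤) {D : ℝ}
    (hD : (mInt ρ P Q).toReal < D) : LamStar ρ P Q D ≠ ⊤ := by
  set mR := (mInt ρ P Q).toReal with hmRdef
  have hmR0 : 0 ≤ mR := ENNReal.toReal_nonneg
  set δ := (D - mR) / 2 with hδdef
  have hδ : 0 < δ := by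
    rw [hδdef]
    linarith
  have htd := tendsto_inv_Gfun hρm hρ0 hG1
  have hev := (ENNReal.tendsto_nhds_zero.1 htd) (ENNReal.ofReal δ)
    (ENNReal.ofReal_pos.2 hδ)
  obtain ⟨n₀, hn₀1, hn₀2⟩ := (hev.and (eventually_ge_atTop 1)).exists
  have hn₀pos : (0:ℝ) < (n₀:ℝ) := by exact_mod_cast hn₀2
  have hGn₀ : Gfun ρ P Q (n₀:ℝ) ≤ ENNReal.ofReal ((n₀:ℝ) * δ) := by
    have h2 := mul_le_mul_right hn₀1 ((n₀:ℝ≥0∞))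
    rw [← mul_assoc, ENNReal.mul_inv_cancel (by exact_mod_cast hn₀pos.ne')
      (ENNReal.natCast_ne_top n₀), one_mul] at h2
    rw [ENNReal.ofReal_mul hn₀pos.le, ENNReal.ofReal_natCast]
    exact h2
  have hB : LamStar ρ P Q D ≤ (((n₀:ℝ) * δ : ℝ) : EReal) := by
    apply LamStar_le
    intro l hl
    rcases eq_or_lt_of_le hl with rfl | hl0
    · rw [Lam_zero']
      simp only [zero_mul, EReal.coe_zero, sub_zero]
      exact_mod_cast by positivity
    · rw [term_eq hρm hρ0 hl0 D, ofReal_mul_mInt hm (by linarith : (0:ℝ) ≤ -l), ← hmRdef]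
      have hnl : 0 ≤ -l := by linarith
      rcases le_total (-l) (n₀:ℝ) with hle | hge
      · have hGl : Gfun ρ P Q (-l) ≤ ENNReal.ofReal ((n₀:ℝ) * δ) :=
          le_trans (Gfun_mono hρm hρ0 hnl hle) hGn₀
        calc ((l * D : ℝ) : EReal)
            + ((ENNReal.ofReal (-l * mR) + Gfun ρ P Q (-l) : ℝ≥0∞) : EReal)
            ≤ ((l * D : ℝ) : EReal)
              + ((ENNReal.ofReal (-l * mR) + ENNReal.ofReal ((n₀:ℝ) * δ) : ℝ≥0∞) : EReal) :=
              add_le_add_right (EReal.coe_ennreal_le_coe_ennreal_iff.2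
                (add_le_add_right hGl _)) _
          _ = ((l * D + (-l * mR + (n₀:ℝ) * δ) : ℝ) : EReal) := by
              rw [ereal_coe_add_ennreal _ (by finiteness),
                ENNReal.toReal_add ENNReal.ofReal_ne_top ENNReal.ofReal_ne_top,
                ENNReal.toReal_ofReal (by positivity), ENNReal.toReal_ofReal (by positivity)]
          _ ≤ (((n₀:ℝ) * δ : ℝ) : EReal) := by
              rw [EReal.coe_le_coe_iff]
              nlinarith
      · have hGl : Gfun ρ P Q (-l) ≤ ENNReal.ofReal (-l * δ) := by
          refine le_trans (Gfun_ratio hρm hρ0 hn₀pos hge) ?_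
          refine le_trans (mul_le_mul_right hGn₀ _) ?_
          rw [← ENNReal.ofReal_mul (by positivity)]
          apply ENNReal.ofReal_le_ofReal
          apply le_of_eq
          field_simp
        calc ((l * D : ℝ) : EReal)
            + ((ENNReal.ofReal (-l * mR) + Gfun ρ P Q (-l) : ℝ≥0∞) : EReal)
            ≤ ((l * D : ℝ) : EReal)
              + ((ENNReal.ofReal (-l * mR) + ENNReal.ofReal (-l * δ) : ℝ≥0∞) : EReal) :=
              add_le_add_right (EReal.coe_ennreal_le_coe_ennreal_iff.2
                (add_le_add_right hGl _)) _
          _ = ((l * D + (-l * mR + -l * δ) : ℝ) : EReal) := by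
              rw [ereal_coe_add_ennreal _ (by finiteness),
                ENNReal.toReal_add ENNReal.ofReal_ne_top ENNReal.ofReal_ne_top,
                ENNReal.toReal_ofReal (by positivity), ENNReal.toReal_ofReal (by positivity)]
          _ ≤ (((n₀:ℝ) * δ : ℝ) : EReal) := by
              rw [EReal.coe_le_coe_iff]
              have hδD : mR + δ - D = -δ := by
                rw [hδdef]
                ring
              nlinarith
  intro htop
  rw [htop] at hB
  exact (EReal.coe_ne_top _) (top_le_iff.1 hB)

lemma LamStar_at_mR (hm : mInt ρ P Q ≠ ⊤) :
    LamStar ρ P Q (mInt ρ P Q).toReal = ((Kint ρ P Q : ℝ≥0∞) : EReal) := by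
  set mR := (mInt ρ P Q).toReal with hmRdef
  have hmR0 : 0 ≤ mR := ENNReal.toReal_nonneg
  apply le_antisymm
  · apply LamStar_le
    intro l hl
    rcases eq_or_lt_of_le hl with rfl | hl0
    · rw [Lam_zero']
      simp only [zero_mul, EReal.coe_zero, sub_zero]
      exact EReal.coe_ennreal_nonneg _
    · rw [term_eq hρm hρ0 hl0, ofReal_mul_mInt hm (by linarith : (0:ℝ) ≤ -l), ← hmRdef]
      calc ((l * mR : ℝ) : EReal)
          + ((ENNReal.ofReal (-l * mR) + Gfun ρ P Q (-l) : ℝ≥0∞) : EReal)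
          ≤ ((l * mR : ℝ) : EReal)
            + ((ENNReal.ofReal (-l * mR) + Kint ρ P Q : ℝ≥0∞) : EReal) :=
            add_le_add_right (EReal.coe_ennreal_le_coe_ennreal_iff.2
              (add_le_add_right (Gfun_le_Kint hρm hρ0 (-l)) _)) _
        _ = ((Kint ρ P Q : ℝ≥0∞) : EReal) := by
            rw [show (l * mR : ℝ) = -(-l * mR) from by ring]
            exact ereal_neg_add_cancel (by nlinarith) _
  · rw [← iSup_Gfun_eq_Kint hρm hρ0]
    apply ennreal_iSup_coe_le
    intro n
    rcases Nat.eq_zero_or_pos n with rfl | hn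
    · rw [Nat.cast_zero, Gfun_zero' hρm hρ0]
      simpa using LamStar_nonneg (ρ := ρ) (P := P) (Q := Q) mR
    · have hc : (0:ℝ) < (n:ℝ) := by exact_mod_cast hn
      refine le_trans ?_ (term_ge_add hρm hρ0 hc mR)
      rw [ofReal_mul_mInt hm hc.le, ← hmRdef]
      rw [show (-(n:ℝ) * mR : ℝ) = -((n:ℝ) * mR) from by ring]
      exact le_of_eq (ereal_neg_add_cancel (by positivity) _).symm

end LamStarLemmas

end Stmt6Aux

/-- if `D_min = inf {D : Λ*(P,Q,D) < ∞}` is finite, then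
`Λ*(P,Q,D_min) = E_X[-log Q{y : ρ(X,y) = ρ_Q(X)}]`. -/
theorem stmt6 {S T : Type*} [MeasurableSpace S] [StandardBorelSpace S]
    [MeasurableSpace T] [StandardBorelSpace T]
    (ρ : S × T → ℝ) (hρm : Measurable ρ) (hρ0 : ∀ z, 0 ≤ ρ z)
    (P : Measure S) (Q : Measure T) [IsProbabilityMeasure P] [IsProbabilityMeasure Q]
    (hne : {D : ℝ | LamStar ρ P Q D ≠ ⊤}.Nonempty) :
    LamStar ρ P Q (DminPQ ρ P Q) =
      ((∫⁻ x, negLog (Q {y | ρ (x, y) = rhoQ ρ Q x}) ∂P : ℝ≥0∞) : EReal) := by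
  obtain ⟨D₀, hD₀⟩ := hne
  simp only [Set.mem_setOf_eq] at hD₀
  have hm : mInt ρ P Q ≠ ⊤ := fun h => hD₀ (LamStar_eq_top_of_mInt_top hρm hρ0 h D₀)
  have hG1 : Gfun ρ P Q 1 ≠ ⊤ := Gfun_ne_top hρm hρ0 hD₀ one_pos
  set mR := (mInt ρ P Q).toReal with hmRdef
  have hlow : ∀ D ∈ {D : ℝ | LamStar ρ P Q D ≠ ⊤}, mR ≤ D := by
    intro D hD
    by_contra hlt
    push_neg at hlt
    exact hD (LamStar_eq_top_of_lt hρm hρ0 hm hlt)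
  have hDmin : DminPQ ρ P Q = mR := by
    unfold DminPQ
    apply le_antisymm
    · apply real_le_of_forall_pos_le_add
      intro ε hε
      apply csInf_le ⟨mR, hlow⟩
      exact LamStar_ne_top_of_gt hρm hρ0 hm hG1 (by linarith)
    · exact le_csInf ⟨D₀, hD₀⟩ hlow
  rw [hDmin, LamStar_at_mR hρm hρ0 hm]
  rfl

end
end

section
/- Let ℚ be the law of a stationary process (Y_n)_{n≥1} with Y_1 ~ Q and n-dimensional marginals Q_n, satisfying the mixing condition C^{−1}ℚ(A)ℚ(B) ≤ ℚ(A∩B) ≤ Cℚ(A)ℚ(B) for some 1 ≤ C < ∞, all n, all A ∈ σ(Y_1^n) and B ∈ σ(Y_{n+1}^∞). Then for every x_1^n ∈ S^n, the essential infimum of ρ_n(x_1^n, Y_1^n) under Q_n equals (1/n) Σ_{k=1}^n ρ_Q(x_k). -/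
open MeasureTheory Filter Set Topology Classical
open scoped ENNReal NNReal

noncomputable section

section AuxEssInf

variable {α : Type*} [MeasurableSpace α] {μ : Measure α} [IsProbabilityMeasure μ] {f : α → ℝ}

lemma aux_exists_nat (f : α → ℝ) : ∃ m : ℕ, μ {y | f y ≤ (m : ℝ)} ≠ 0 := by
  by_contra h
  push_neg at h
  have h1 : μ (⋃ m : ℕ, {y | f y ≤ (m : ℝ)}) = 0 :=
    measure_iUnion_null fun m => by simpa using h m
  have h2 : (⋃ m : ℕ, {y | f y ≤ (m : ℝ)}) = Set.univ := by
    ext y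
    simp only [Set.mem_iUnion, Set.mem_setOf_eq, Set.mem_univ, iff_true]
    exact exists_nat_ge (f y)
  rw [h2] at h1
  simp [measure_univ] at h1

lemma aux_bdd (f : α → ℝ) : BddAbove {a : ℝ | μ {x | f x < a} = 0} := by
  obtain ⟨m, hm⟩ := aux_exists_nat (μ := μ) f
  refine ⟨(m : ℝ) + 1, fun a ha => ?_⟩
  simp only [Set.mem_setOf_eq] at ha
  by_contra hab
  push_neg at hab
  refine hm (measure_mono_null ?_ ha)
  intro y hy
  simp only [Set.mem_setOf_eq] at hy ⊢
  linarith

lemma aux_essInf_le (hf0 : ∀ y, 0 ≤ f y) {c : ℝ} (hc : μ {y | f y ≤ c} ≠ 0) :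
    essInf f μ ≤ c := by
  rw [essInf_eq_sSup]
  refine csSup_le ⟨0, ?_⟩ fun a ha => ?_
  · have h0 : {x | f x < 0} = (∅ : Set α) := by
      ext y; simp [not_lt.2 (hf0 y)]
    simp [Set.mem_setOf_eq, h0]
  · simp only [Set.mem_setOf_eq] at ha
    by_contra hac
    push_neg at hac
    refine hc (measure_mono_null ?_ ha)
    intro y hy
    simp only [Set.mem_setOf_eq] at hy ⊢
    linarith

lemma aux_le_essInf {c : ℝ} (hc : ∀ᵐ y ∂μ, c ≤ f y) : c ≤ essInf f μ := by
  rw [essInf_eq_sSup]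
  refine le_csSup (aux_bdd f) ?_
  rw [ae_iff] at hc
  simpa [not_le] using hc

end AuxEssInf

/-- under the mixing condition, for every `n` and every
`x_1^n ∈ S^n`, the essential infimum of `ρ_n(x_1^n, Y_1^n)` under `Q_n` equals
`(1/n) ∑_{k=1}^n ρ_Q(x_k)`. -/
theorem stmt14 {S T : Type*} [MeasurableSpace S] [StandardBorelSpace S]
    [MeasurableSpace T] [StandardBorelSpace T]
    (ρ : S × T → ℝ) (hρm : Measurable ρ) (hρ0 : ∀ z, 0 ≤ ρ z)
    (𝒬 : Measure (ℕ → T)) [IsProbabilityMeasure 𝒬]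
    (hQstat : MeasurePreserving shiftSeq 𝒬 𝒬)
    (Q : Measure T) [IsProbabilityMeasure Q] (hQ1 : 𝒬.map (fun y => y 0) = Q)
    (C : ℝ) (hC : 1 ≤ C) (hmix : Mixing 𝒬 C) :
    ∀ (n : ℕ) (x : Fin n → S),
      essInf (fun y => rhoFin ρ n x y) (margN 𝒬 n) =
        (n : ℝ)⁻¹ * ∑ k, rhoQ ρ Q (x k) := by
  -- measurability of the shift and coordinate maps
  have hshiftm : Measurable (shiftSeq (α := T)) :=
    measurable_pi_lambda _ fun m => measurable_pi_apply (m + 1)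
  -- all one-dimensional marginals equal `Q`
  have hcoord : ∀ k : ℕ, 𝒬.map (fun y => y k) = Q := by
    intro k
    induction k with
    | zero => exact hQ1
    | succ k ih =>
      have hco : (fun y : ℕ → T => y (k + 1)) = (fun y : ℕ → T => y k) ∘ shiftSeq := rfl
      rw [hco, ← Measure.map_map (measurable_pi_apply k) hshiftm, hQstat.map_eq, ih]
  have hcm : ∀ (k : ℕ) (B : Set T), MeasurableSet B → 𝒬 {y | y k ∈ B} = Q B := by
    intro k B hB
    rw [← hcoord k, Measure.map_apply (measurable_pi_apply k) hB]
    rfl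
  -- measurability of cylinder sets
  have hmeasJ : ∀ (m : ℕ) (B : ℕ → Set T), (∀ k, MeasurableSet (B k)) →
      MeasurableSet {y : ℕ → T | ∀ k, k < m → y k ∈ B k} := by
    intro m B hB
    have h : {y : ℕ → T | ∀ k, k < m → y k ∈ B k}
        = ⋂ k, ⋂ (_ : k < m), (fun y : ℕ → T => y k) ⁻¹' B k := by
      ext y; simp [Set.mem_iInter]
    rw [h]
    exact MeasurableSet.iInter fun k => MeasurableSet.iInter fun _ =>
      (measurable_pi_apply k) (hB k)
  -- the key product lower bound from mixing
  have hmixprod : ∀ (m : ℕ) (A : ℕ → Set T), (∀ k, MeasurableSet (A k)) →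
      (ENNReal.ofReal C)⁻¹ ^ m * ∏ k ∈ Finset.range m, Q (A k)
        ≤ 𝒬 {y | ∀ k, k < m → y k ∈ A k} := by
    intro m
    induction m with
    | zero =>
      intro A hA
      have h : {y : ℕ → T | ∀ k, k < 0 → y k ∈ A k} = Set.univ := by
        ext y; simp
      simp [h]
    | succ m ih =>
      intro A hA
      set B0 : Set (ℕ → T) := {y | y 0 ∈ A 0} with hB0def
      set J : Set (ℕ → T) := {y | ∀ k, k < m → y k ∈ A (k + 1)} with hJdef
      have hsplit : {y : ℕ → T | ∀ k, k < m + 1 → y k ∈ A k} = B0 ∩ shiftSeq ⁻¹' J := by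
        ext y
        simp only [Set.mem_setOf_eq, Set.mem_inter_iff, Set.mem_preimage, hB0def, hJdef,
          shiftSeq]
        constructor
        · intro h; exact ⟨h 0 (Nat.succ_pos m), fun k hk => h (k + 1) (by omega)⟩
        · rintro ⟨h0, h1⟩ k hk
          cases k with
          | zero => exact h0
          | succ j => exact h1 j (by omega)
      have hB0 : MeasurableSet[MeasurableSpace.comap
          (fun (y : ℕ → T) (k : Fin 1) => y (k : ℕ)) inferInstance] B0 :=
        ⟨{v : Fin 1 → T | v 0 ∈ A 0}, (measurable_pi_apply (0 : Fin 1)) (hA 0), rfl⟩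
      have hJm : MeasurableSet J := hmeasJ m _ fun k => hA (k + 1)
      have hJ : MeasurableSet[MeasurableSpace.comap
          (fun (y : ℕ → T) (k : ℕ) => y (k + 1)) inferInstance] (shiftSeq ⁻¹' J) :=
        ⟨J, hJm, rfl⟩
      have hmx := (hmix 1 B0 (shiftSeq ⁻¹' J) hB0 hJ).1
      have hJQ : 𝒬 (shiftSeq ⁻¹' J) = 𝒬 J := hQstat.measure_preimage hJm.nullMeasurableSet
      have h1 : 𝒬 B0 = Q (A 0) := hcm 0 (A 0) (hA 0)
      have h2 : (ENNReal.ofReal C)⁻¹ ^ m * ∏ k ∈ Finset.range m, Q (A (k + 1)) ≤ 𝒬 J :=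
        ih (fun k => A (k + 1)) fun k => hA (k + 1)
      rw [hsplit]
      refine le_trans ?_ hmx
      rw [hJQ, h1]
      calc (ENNReal.ofReal C)⁻¹ ^ (m + 1) * ∏ k ∈ Finset.range (m + 1), Q (A k)
          = (ENNReal.ofReal C)⁻¹ * (Q (A 0) *
            ((ENNReal.ofReal C)⁻¹ ^ m * ∏ k ∈ Finset.range m, Q (A (k + 1)))) := by
            rw [Finset.prod_range_succ', pow_succ]; ring
        _ ≤ (ENNReal.ofReal C)⁻¹ * (Q (A 0) * 𝒬 J) := by gcongr
  intro n x
  haveI hQae : (ae 𝒬).NeBot := inferInstance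
  set tgt : ℝ := (n : ℝ)⁻¹ * ∑ k, rhoQ ρ Q (x k) with htgt
  have hπm : Measurable (fun (y : ℕ → T) (k : Fin n) => y (k : ℕ)) :=
    measurable_pi_lambda _ fun k => measurable_pi_apply _
  haveI hmargprob : IsProbabilityMeasure (margN 𝒬 n) := by
    rw [margN]; exact Measure.isProbabilityMeasure_map hπm.aemeasurable
  have hg : ∀ k : Fin n, Measurable fun t : T => ρ (x k, t) := fun k =>
    hρm.comp (measurable_const.prodMk measurable_id)
  have hrhoQ0 : ∀ k : Fin n, 0 ≤ rhoQ ρ Q (x k) := by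
    intro k
    rw [rhoQ]
    exact aux_le_essInf (Filter.Eventually.of_forall fun t => hρ0 _)
  have hf0 : ∀ v : Fin n → T, 0 ≤ rhoFin ρ n x v := fun v =>
    mul_nonneg (by positivity) (Finset.sum_nonneg fun k _ => hρ0 _)
  -- positive measure of the good event, for every ε > 0
  have hub : ∀ ε : ℝ, 0 < ε → (margN 𝒬 n) {v | rhoFin ρ n x v ≤ tgt + ε} ≠ 0 := by
    intro ε hε
    set A : ℕ → Set T := fun k => if h : k < n then
        {t | ρ (x ⟨k, h⟩, t) < rhoQ ρ Q (x ⟨k, h⟩) + ε} else Set.univ with hAdef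
    have hAm : ∀ k, MeasurableSet (A k) := by
      intro k
      rw [hAdef]
      dsimp only
      split
      · exact measurableSet_lt (hg _) measurable_const
      · exact MeasurableSet.univ
    have hAQ : ∀ k, Q (A k) ≠ 0 := by
      intro k
      rw [hAdef]
      dsimp only
      split
      · rename_i hkn
        intro h0
        have hb := aux_bdd (μ := Q) fun t => ρ (x ⟨k, hkn⟩, t)
        have hle : rhoQ ρ Q (x ⟨k, hkn⟩) + ε ≤ rhoQ ρ Q (x ⟨k, hkn⟩) := by
          have hmem : rhoQ ρ Q (x ⟨k, hkn⟩) + ε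
              ∈ {a : ℝ | Q {t | ρ (x ⟨k, hkn⟩, t) < a} = 0} := h0
          calc rhoQ ρ Q (x ⟨k, hkn⟩) + ε
              ≤ sSup {a : ℝ | Q {t | ρ (x ⟨k, hkn⟩, t) < a} = 0} := le_csSup hb hmem
            _ = essInf (fun t => ρ (x ⟨k, hkn⟩, t)) Q := (essInf_eq_sSup Q _).symm
            _ = rhoQ ρ Q (x ⟨k, hkn⟩) := rfl
        linarith
      · simp
    have hE := hmixprod n A hAm
    have hEpos : 𝒬 {y | ∀ k, k < n → y k ∈ A k} ≠ 0 := by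
      intro h0
      rw [h0] at hE
      have hC0 : (ENNReal.ofReal C)⁻¹ ≠ 0 := ENNReal.inv_ne_zero.mpr ENNReal.ofReal_ne_top
      have hne : (ENNReal.ofReal C)⁻¹ ^ n * ∏ k ∈ Finset.range n, Q (A k) ≠ 0 :=
        mul_ne_zero (pow_ne_zero _ hC0) (Finset.prod_ne_zero_iff.mpr fun k _ => hAQ k)
      exact hne (le_antisymm hE (zero_le ..))
    have hset : (fun (y : ℕ → T) (k : Fin n) => y (k : ℕ)) ⁻¹'
        {v : Fin n → T | ∀ k : Fin n, v k ∈ A (k : ℕ)}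
        = {y | ∀ k, k < n → y k ∈ A k} := by
      ext y
      simp only [Set.mem_preimage, Set.mem_setOf_eq]
      constructor
      · intro h k hk; exact h ⟨k, hk⟩
      · intro h k; exact h k k.2
    have hSm : MeasurableSet {v : Fin n → T | ∀ k : Fin n, v k ∈ A (k : ℕ)} := by
      have h : {v : Fin n → T | ∀ k : Fin n, v k ∈ A (k : ℕ)}
          = ⋂ k : Fin n, (fun v : Fin n → T => v k) ⁻¹' A (k : ℕ) := by
        ext v; simp [Set.mem_iInter]
      rw [h]
      exact MeasurableSet.iInter fun k => (measurable_pi_apply k) (hAm _)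
    have hsub : {v : Fin n → T | ∀ k : Fin n, v k ∈ A (k : ℕ)}
        ⊆ {v | rhoFin ρ n x v ≤ tgt + ε} := by
      intro v hv
      have hvk : ∀ k : Fin n, ρ (x k, v k) < rhoQ ρ Q (x k) + ε := by
        intro k
        have h := hv k
        rw [hAdef] at h
        simp only [Fin.is_lt, dif_pos, Fin.eta, Set.mem_setOf_eq] at h
        exact h
      show rhoFin ρ n x v ≤ tgt + ε
      rw [rhoFin]
      have hsum : ∑ k, ρ (x k, v k) ≤ (∑ k, rhoQ ρ Q (x k)) + n * ε := by
        calc ∑ k, ρ (x k, v k) ≤ ∑ k : Fin n, (rhoQ ρ Q (x k) + ε) :=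
            Finset.sum_le_sum fun k _ => (hvk k).le
          _ = (∑ k, rhoQ ρ Q (x k)) + n * ε := by
            rw [Finset.sum_add_distrib, Finset.sum_const, Finset.card_univ, Fintype.card_fin]
            simp [nsmul_eq_mul]
      calc (n : ℝ)⁻¹ * ∑ k, ρ (x k, v k)
          ≤ (n : ℝ)⁻¹ * ((∑ k, rhoQ ρ Q (x k)) + n * ε) :=
            mul_le_mul_of_nonneg_left hsum (by positivity)
        _ = tgt + (n : ℝ)⁻¹ * n * ε := by rw [htgt]; ring
        _ ≤ tgt + ε := by
            rcases eq_or_ne (n : ℝ) 0 with h | h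
            · simp [h]; linarith
            · rw [inv_mul_cancel₀ h, one_mul]
    intro h0
    apply hEpos
    rw [← hset]
    have hnull : margN 𝒬 n {v : Fin n → T | ∀ k : Fin n, v k ∈ A (k : ℕ)} = 0 :=
      measure_mono_null hsub h0
    rw [margN, Measure.map_apply hπm hSm] at hnull
    exact hnull
  -- a.e. lower bound
  have hael : ∀ᵐ v ∂(margN 𝒬 n), ∀ k : Fin n, rhoQ ρ Q (x k) ≤ ρ (x k, v k) := by
    rw [MeasureTheory.ae_all_iff]
    intro k
    set r : ℝ := rhoQ ρ Q (x k) with hr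
    have hQae' : ∀ᵐ t ∂Q, r ≤ ρ (x k, t) := by
      have hbdd : Filter.IsBoundedUnder (· ≥ ·) (ae Q) fun t => ρ (x k, t) :=
        Filter.isBoundedUnder_of ⟨0, fun t => hρ0 _⟩
      rw [hr, rhoQ]
      exact ae_essInf_le hbdd
    have hsetm : MeasurableSet {t : T | r ≤ ρ (x k, t)} :=
      measurableSet_le measurable_const (hg k)
    have h1 : ∀ᵐ y ∂𝒬, r ≤ ρ (x k, y (k : ℕ)) := by
      rw [← hcoord (k : ℕ)] at hQae'
      exact (MeasureTheory.ae_map_iff (measurable_pi_apply (k : ℕ)).aemeasurable hsetm).mp hQae'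
    have hsetm' : MeasurableSet {v : Fin n → T | r ≤ ρ (x k, v k)} :=
      measurableSet_le measurable_const ((hg k).comp (measurable_pi_apply k))
    rw [margN]
    exact (MeasureTheory.ae_map_iff hπm.aemeasurable hsetm').mpr h1
  have hlow : tgt ≤ essInf (fun v => rhoFin ρ n x v) (margN 𝒬 n) := by
    apply aux_le_essInf
    filter_upwards [hael] with v hv
    show tgt ≤ rhoFin ρ n x v
    rw [rhoFin, htgt]
    exact mul_le_mul_of_nonneg_left (Finset.sum_le_sum fun k _ => hv k) (by positivity)
  have hup : essInf (fun v => rhoFin ρ n x v) (margN 𝒬 n) ≤ tgt :=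
    le_of_forall_pos_le_add fun ε hε => aux_essInf_le hf0 (hub ε hε)
  exact le_antisymm hup hlow

end
end

section
/- Let Z be a nonnegative real-valued random variable and define Λ*(D) := sup_{λ ≤ 0}[λD − log E e^{λZ}]. Then log Prob{Z ≤ D} ≤ −Λ*(D) for every D, with equality whenever D ≤ essinf Z. Moreover, log Prob{Z ≤ D} > −∞ if and only if Λ*(D) < ∞. -/
open MeasureTheory Filter Set Topology Classical
open scoped ENNReal NNReal

noncomputable section

private lemma ereal_le_of_forall_coe_lt_le {x y : EReal}
    (h : ∀ r : ℝ, (r : EReal) < x → (r : EReal) ≤ y) : x ≤ y := by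
  by_contra hxy
  push_neg at hxy
  obtain ⟨r, hyr, hrx⟩ := EReal.exists_between_coe_real hxy
  exact absurd (h r hrx) (not_le.mpr hyr)

/-- for a nonnegative random variable `Z` and
`Λ*(D) = sup_{λ ≤ 0}[λD - log E e^{λZ}]`: `log P(Z ≤ D) ≤ -Λ*(D)` for every `D`,
with equality whenever `D ≤ essinf Z`; moreover `log P(Z ≤ D) > -∞ ↔ Λ*(D) < ∞`. -/
theorem stmt18 {Ω : Type*} [MeasurableSpace Ω] (ℙ : Measure Ω) [IsProbabilityMeasure ℙ]
    (Z : Ω → ℝ) (hZm : Measurable Z) (hZ0 : ∀ ω, 0 ≤ Z ω) (D : ℝ) :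
    eLog (ℙ {ω | Z ω ≤ D}) ≤
      -(FLT (fun l => eLog (∫⁻ ω, ENNReal.ofReal (Real.exp (l * Z ω)) ∂ℙ)) D) ∧
    (D ≤ essInf Z ℙ →
      eLog (ℙ {ω | Z ω ≤ D}) =
        -(FLT (fun l => eLog (∫⁻ ω, ENNReal.ofReal (Real.exp (l * Z ω)) ∂ℙ)) D)) ∧
    (eLog (ℙ {ω | Z ω ≤ D}) ≠ ⊥ ↔
      FLT (fun l => eLog (∫⁻ ω, ENNReal.ofReal (Real.exp (l * Z ω)) ∂ℙ)) D ≠ ⊤) := by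
  classical
  set S : Set Ω := {ω | Z ω ≤ D} with hS
  have hSmeas : MeasurableSet S := hZm measurableSet_Iic
  set p : ℝ≥0∞ := ℙ S with hp
  have hpne : p ≠ ⊤ := measure_ne_top _ _
  set G : ℝ → EReal :=
    fun l => eLog (∫⁻ ω, ENNReal.ofReal (Real.exp (l * Z ω)) ∂ℙ) with hG
  have hmeas : ∀ l : ℝ, Measurable fun ω => Real.exp (l * Z ω) :=
    fun l => (hZm.const_mul l).exp
  have hbd : ∀ l : ℝ, l ≤ 0 → ∀ ω, Real.exp (l * Z ω) ≤ 1 := fun l hl ω =>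
    Real.exp_le_one_iff.mpr (mul_nonpos_of_nonpos_of_nonneg hl (hZ0 ω))
  have hInt : ∀ l : ℝ, l ≤ 0 → Integrable (fun ω => Real.exp (l * Z ω)) ℙ := by
    intro l hl
    refine (integrable_const (1 : ℝ)).mono' (hmeas l).aestronglyMeasurable ?_
    filter_upwards with ω
    rw [Real.norm_eq_abs, abs_of_nonneg (Real.exp_nonneg _)]
    exact hbd l hl ω
  set M : ℝ → ℝ := fun l => ∫ ω, Real.exp (l * Z ω) ∂ℙ with hM
  have hIeq : ∀ l : ℝ, l ≤ 0 →
      (∫⁻ ω, ENNReal.ofReal (Real.exp (l * Z ω)) ∂ℙ) = ENNReal.ofReal (M l) :=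
    fun l hl => (MeasureTheory.ofReal_integral_eq_lintegral_ofReal (hInt l hl)
      (Filter.Eventually.of_forall fun ω => (Real.exp_pos _).le)).symm
  have hIpos : ∀ l : ℝ, 0 < ∫⁻ ω, ENNReal.ofReal (Real.exp (l * Z ω)) ∂ℙ := by
    intro l
    rw [lintegral_pos_iff_support (hmeas l).ennreal_ofReal]
    have hsupp : Function.support (fun ω => ENNReal.ofReal (Real.exp (l * Z ω))) = Set.univ := by
      ext ω
      simp [Function.mem_support, (ENNReal.ofReal_pos.mpr (Real.exp_pos _)).ne']
    rw [hsupp]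
    simp
  have hMpos : ∀ l : ℝ, l ≤ 0 → 0 < M l := by
    intro l hl
    have h := hIpos l
    rw [hIeq l hl, ENNReal.ofReal_pos] at h
    exact h
  have hGeq : ∀ l : ℝ, l ≤ 0 → G l = ((Real.log (M l) : ℝ) : EReal) := by
    intro l hl
    have h0 : (∫⁻ ω, ENNReal.ofReal (Real.exp (l * Z ω)) ∂ℙ) ≠ 0 := (hIpos l).ne'
    have hne : (∫⁻ ω, ENNReal.ofReal (Real.exp (l * Z ω)) ∂ℙ) ≠ ⊤ := by
      rw [hIeq l hl]; exact ENNReal.ofReal_ne_top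
    simp only [hG, eLog, if_neg h0, if_neg hne]
    rw [hIeq l hl, ENNReal.toReal_ofReal (hMpos l hl).le]
  have hchern : ∀ l : ℝ, l ≤ 0 → p.toReal * Real.exp (l * D) ≤ M l := by
    intro l hl
    have h1 : ∫ ω, S.indicator (fun _ => Real.exp (l * D)) ω ∂ℙ
        = p.toReal * Real.exp (l * D) := by
      rw [MeasureTheory.integral_indicator_const _ hSmeas, smul_eq_mul, hp, measureReal_def]
    rw [← h1]
    refine MeasureTheory.integral_mono ((integrable_const _).indicator hSmeas) (hInt l hl) ?_
    intro ω
    by_cases hω : ω ∈ S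
    · rw [Set.indicator_of_mem hω]
      exact Real.exp_le_exp.mpr (mul_le_mul_of_nonpos_left hω hl)
    · rw [Set.indicator_of_notMem hω]
      exact (Real.exp_pos _).le
  have key1 : FLT G D ≤ -(eLog p) := by
    refine iSup₂_le fun l hl => ?_
    rcases eq_or_ne p 0 with hp0 | hp0
    · rw [hp0]
      simp [eLog]
    · have hppos : 0 < p.toReal := ENNReal.toReal_pos hp0 hpne
      have heLogp : eLog p = ((Real.log p.toReal : ℝ) : EReal) := by
        simp only [eLog, if_neg hp0, if_neg hpne]
      rw [heLogp, hGeq l hl, ← EReal.coe_neg, ← EReal.coe_sub, EReal.coe_le_coe_iff]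
      have hle : Real.log (p.toReal * Real.exp (l * D)) ≤ Real.log (M l) :=
        Real.log_le_log (by positivity) (hchern l hl)
      rw [Real.log_mul hppos.ne' (Real.exp_ne_zero _), Real.log_exp] at hle
      linarith
  set f : ℝ → ℝ := fun l => ∫ ω, Real.exp (l * (Z ω - D)) ∂ℙ with hf
  have hfM : ∀ l : ℝ, f l = Real.exp (-(l * D)) * M l := by
    intro l
    have hptw : ∀ ω, Real.exp (l * (Z ω - D))
        = Real.exp (-(l * D)) * Real.exp (l * Z ω) := by
      intro ω
      rw [← Real.exp_add]
      congr 1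
      ring
    simp only [hf, hM]
    simp_rw [hptw]
    rw [MeasureTheory.integral_const_mul]
  have hfpos : ∀ l : ℝ, l ≤ 0 → 0 < f l := by
    intro l hl
    rw [hfM l]
    exact mul_pos (Real.exp_pos _) (hMpos l hl)
  have hterm : ∀ l : ℝ, l ≤ 0 →
      ((l * D : ℝ) : EReal) - G l = ((-Real.log (f l) : ℝ) : EReal) := by
    intro l hl
    rw [hGeq l hl, ← EReal.coe_sub]
    congr 1
    rw [hfM l, Real.log_mul (Real.exp_ne_zero _) (hMpos l hl).ne', Real.log_exp]
    ring
  have hDCT : (∀ᵐ ω ∂ℙ, D ≤ Z ω) →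
      Filter.Tendsto (fun n : ℕ => f (-(n : ℝ))) Filter.atTop (nhds p.toReal) := by
    intro hae
    have hlim : ∫ ω, S.indicator (fun _ => (1 : ℝ)) ω ∂ℙ = p.toReal := by
      rw [MeasureTheory.integral_indicator_const _ hSmeas, smul_eq_mul, hp, mul_one, measureReal_def]
    rw [← hlim]
    refine MeasureTheory.tendsto_integral_of_dominated_convergence (fun _ => (1 : ℝ))
      (fun n => ((hZm.sub_const D).const_mul _).exp.aestronglyMeasurable)
      (integrable_const 1) (fun n => ?_) ?_
    · filter_upwards [hae] with ω hω
      rw [Real.norm_eq_abs, abs_of_nonneg (Real.exp_nonneg _)]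
      exact Real.exp_le_one_iff.mpr
        (mul_nonpos_of_nonpos_of_nonneg (neg_nonpos.mpr (Nat.cast_nonneg n))
          (sub_nonneg.mpr hω))
    · filter_upwards [hae] with ω hω
      rcases eq_or_lt_of_le hω with heq | hlt
      · have hz : Z ω - D = 0 := by rw [← heq]; ring
        have hind : S.indicator (fun _ => (1 : ℝ)) ω = 1 :=
          Set.indicator_of_mem (by simp [hS, heq.ge]) _
        rw [hind]
        simp [hz]
      · have hind : S.indicator (fun _ => (1 : ℝ)) ω = 0 :=
          Set.indicator_of_notMem (by simp [hS]; exact hlt) _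
        rw [hind]
        have hc : 0 < Z ω - D := sub_pos.mpr hlt
        have hb : Filter.Tendsto (fun n : ℕ => -((n : ℝ) * (Z ω - D)))
            Filter.atTop Filter.atBot := by
          apply tendsto_neg_atTop_atBot.comp
          exact (tendsto_natCast_atTop_atTop).atTop_mul_const hc
        have := Real.tendsto_exp_atBot.comp hb
        simpa [Function.comp_def, neg_mul] using this
  have htop : p = 0 → FLT G D = ⊤ := by
    intro hp0
    have hae : ∀ᵐ ω ∂ℙ, D < Z ω := by
      rw [MeasureTheory.ae_iff]
      have hsets : {ω | ¬ D < Z ω} = S := by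
        ext ω; simp [hS, not_lt]
      rw [hsets, ← hp, hp0]
    have h0 : Filter.Tendsto (fun n : ℕ => f (-(n : ℝ))) Filter.atTop (nhds 0) := by
      have := hDCT (hae.mono fun ω h => h.le)
      rwa [hp0, ENNReal.toReal_zero] at this
    have h0' : Filter.Tendsto (fun n : ℕ => f (-(n : ℝ))) Filter.atTop (nhdsWithin 0 (Set.Ioi 0)) := by
      refine tendsto_nhdsWithin_of_tendsto_nhds_of_eventually_within _ h0 ?_
      filter_upwards with n
      exact hfpos _ (neg_nonpos.mpr (Nat.cast_nonneg n))
    have hT : Filter.Tendsto (fun n : ℕ => -Real.log (f (-(n : ℝ))))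
        Filter.atTop Filter.atTop :=
      tendsto_neg_atBot_atTop.comp (Real.tendsto_log_nhdsGT_zero.comp h0')
    rw [eq_top_iff]
    refine ereal_le_of_forall_coe_lt_le fun r _ => ?_
    obtain ⟨n, hn⟩ := (hT.eventually_ge_atTop r).exists
    calc (r : EReal) ≤ ((-Real.log (f (-(n : ℝ))) : ℝ) : EReal) := EReal.coe_le_coe_iff.mpr hn
      _ = ((-(n : ℝ) * D : ℝ) : EReal) - G (-(n : ℝ)) :=
          (hterm _ (neg_nonpos.mpr (Nat.cast_nonneg n))).symm
      _ ≤ FLT G D := by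
          refine le_iSup₂ (f := fun l (_ : l ∈ Iic (0 : ℝ)) => ((l * D : ℝ) : EReal) - G l)
            (-(n : ℝ)) ?_
          exact mem_Iic.mpr (neg_nonpos.mpr (Nat.cast_nonneg n))
  have hge : p ≠ 0 → (∀ᵐ ω ∂ℙ, D ≤ Z ω) → -(eLog p) ≤ FLT G D := by
    intro hp0 hae
    have hppos : 0 < p.toReal := ENNReal.toReal_pos hp0 hpne
    have heLogp : eLog p = ((Real.log p.toReal : ℝ) : EReal) := by
      simp only [eLog, if_neg hp0, if_neg hpne]
    rw [heLogp, ← EReal.coe_neg]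
    have hT : Filter.Tendsto (fun n : ℕ => -Real.log (f (-(n : ℝ))))
        Filter.atTop (nhds (-Real.log p.toReal)) :=
      (((Real.continuousAt_log hppos.ne').tendsto.comp (hDCT hae)).neg)
    refine ereal_le_of_forall_coe_lt_le fun r hr => ?_
    have hr' : r < -Real.log p.toReal := EReal.coe_lt_coe_iff.mp hr
    obtain ⟨n, hn⟩ := (hT.eventually_const_lt hr').exists
    calc (r : EReal) ≤ ((-Real.log (f (-(n : ℝ))) : ℝ) : EReal) := EReal.coe_le_coe_iff.mpr hn.le
      _ = ((-(n : ℝ) * D : ℝ) : EReal) - G (-(n : ℝ)) :=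
          (hterm _ (neg_nonpos.mpr (Nat.cast_nonneg n))).symm
      _ ≤ FLT G D := by
          refine le_iSup₂ (f := fun l (_ : l ∈ Iic (0 : ℝ)) => ((l * D : ℝ) : EReal) - G l)
            (-(n : ℝ)) ?_
          exact mem_Iic.mpr (neg_nonpos.mpr (Nat.cast_nonneg n))
  have part1 : eLog p ≤ -(FLT G D) := by
    rw [← neg_neg (eLog p)]
    exact EReal.neg_le_neg_iff.mpr key1
  refine ⟨part1, ?_, ?_, ?_⟩
  · intro hD
    rcases eq_or_ne p 0 with hp0 | hp0
    · rw [htop hp0, hp0]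
      simp [eLog]
    · have hae : ∀ᵐ ω ∂ℙ, D ≤ Z ω := by
        have hb : Filter.IsBoundedUnder (· ≥ ·) (MeasureTheory.ae ℙ) Z :=
          Filter.isBoundedUnder_of ⟨0, fun ω => hZ0 ω⟩
        filter_upwards [ae_essInf_le hb] with ω hω using hD.trans hω
      refine le_antisymm part1 ?_
      rw [← neg_neg (eLog p)]
      exact EReal.neg_le_neg_iff.mpr (hge hp0 hae)
  · intro hne hFtop
    rcases eq_or_ne p 0 with hp0 | hp0
    · exact hne (by rw [hp0]; simp [eLog])
    · have heLogp : eLog p = ((Real.log p.toReal : ℝ) : EReal) := by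
        simp only [eLog, if_neg hp0, if_neg hpne]
      rw [hFtop, heLogp, ← EReal.coe_neg] at key1
      exact EReal.coe_ne_top _ (top_le_iff.mp key1)
  · intro hFne hbot
    refine hFne (htop ?_)
    by_contra hp0
    rw [eLog, if_neg hp0, if_neg hpne] at hbot
    exact EReal.coe_ne_bot _ hbot

end
end
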